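/- arXiv:2102.07149 — 5 statements merged into one kernel-verified Lean document; each statement's English description precedes it below -/
import Mathlib

section
/- For every p ≥ 2 and all i, j with 3 < i, j ≤ 2n: (R^p·ω)(e_1, e_2, …, e_1, e_2, e_2, e_i, e_1, e_j), with p−1 leading pairs (e_1, e_2) followed by e_2, e_i, e_1, e_j, equals (−1)^p ε^{p−1} (p−1)! h(e_i, e_j) (2α ω(e_1, e_2) + ω(e_1, e_3)). -/
noncomputable section

/-- Gauss-equation curvature `R(X,Y)Z = h(Y,Z)·S(X) − h(X,Z)·S(Y)`. -/
def RR {V : Type*} [AddCommGroup V] [Module ℝ V]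
    (h : V →ₗ[ℝ] V →ₗ[ℝ] ℝ) (S : V →ₗ[ℝ] V) (X Y Z : V) : V :=
  h Y Z • S X - h X Z • S Y

/-- One application of the curvature action on an `m`-linear form (encoded as a
function on lists of vectors): `(R·T)(X,Y,Z₁,…,Zₘ) = −∑ᵢ T(Z₁,…,R(X,Y)Zᵢ,…,Zₘ)`;
the two newest (leftmost) arguments are consumed. -/
def RAct {V : Type*} [AddCommGroup V] [Module ℝ V]
    (h : V →ₗ[ℝ] V →ₗ[ℝ] ℝ) (S : V →ₗ[ℝ] V) (T : List V → ℝ) : List V → ℝ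
  | X :: Y :: Zs =>
      -∑ i ∈ Finset.range Zs.length, T (Zs.set i (RR h S X Y (Zs.getD i 0)))
  | _ => 0

/-- `R^p · ω`, as a function on lists of vectors (of length `2p+2`):
`R⁰·ω = ω` and `R^p·ω = R·(R^{p−1}·ω)`. -/
def Rpow {V : Type*} [AddCommGroup V] [Module ℝ V]
    (h : V →ₗ[ℝ] V →ₗ[ℝ] ℝ) (S : V →ₗ[ℝ] V) (ω : V →ₗ[ℝ] V →ₗ[ℝ] ℝ) (p : ℕ) :
    List V → ℝ :=
  (RAct h S)^[p] (fun l => ω (l.getD 0 0) (l.getD 1 0))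

/-- The list `X, Y, X, Y, …` with `p` pairs `(X, Y)`. -/
def pairList {V : Type*} (X Y : V) : ℕ → List V
  | 0 => []
  | p + 1 => X :: Y :: pairList X Y p

/-- The list `f 1, y, f 2, y, …, f p, y`. -/
def interleave {V : Type*} (f : ℕ → V) (y : V) : ℕ → List V
  | 0 => []
  | p + 1 => interleave f y p ++ [f (p + 1), y]

set_option linter.unusedSectionVars false
set_option maxHeartbeats 1000000
section Helpers
variable {V : Type*} [AddCommGroup V] [Module ℝ V]
  (h : V →ₗ[ℝ] V →ₗ[ℝ] ℝ) (S : V →ₗ[ℝ] V) (ω : V →ₗ[ℝ] V →ₗ[ℝ] ℝ)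
lemma Rpow_zero_apply (l : List V) : Rpow h S ω 0 l = ω (l.getD 0 0) (l.getD 1 0) := rfl
lemma Rpow_succ_apply (p : ℕ) (X Y : V) (Zs : List V) :
    Rpow h S ω (p+1) (X :: Y :: Zs) =
      -∑ i ∈ Finset.range Zs.length,
        Rpow h S ω p (Zs.set i (RR h S X Y (Zs.getD i 0))) := by
  unfold Rpow; rw [Function.iterate_succ_apply']; rfl
lemma RR_self (X Z : V) : RR h S X X Z = 0 := sub_self _
lemma RR_zero_arg (X Y : V) : RR h S X Y 0 = 0 := by simp [RR]
lemma RR_lin_left (c d : ℝ) (u v Y Z : V) :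
    RR h S (c • u + d • v) Y Z = c • RR h S u Y Z + d • RR h S v Y Z := by
  simp only [RR, map_add, map_smul, LinearMap.add_apply, LinearMap.smul_apply, smul_eq_mul]; module
lemma RR_lin_mid (c d : ℝ) (X u v Z : V) :
    RR h S X (c • u + d • v) Z = c • RR h S X u Z + d • RR h S X v Z := by
  simp only [RR, map_add, map_smul, LinearMap.add_apply, LinearMap.smul_apply, smul_eq_mul]; module
lemma RR_lin_arg (c d : ℝ) (X Y u v : V) :
    RR h S X Y (c • u + d • v) = c • RR h S X Y u + d • RR h S X Y v := by
  simp only [RR, map_add, map_smul, smul_eq_mul]; module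
lemma getD_set_ne (l : List V) {k m : ℕ} (hkm : k ≠ m) (v d : V) :
    (l.set k v).getD m d = l.getD m d := by
  simp [List.getD_eq_getElem?_getD, List.getElem?_set_ne hkm]
lemma getD_set_self (l : List V) {k : ℕ} (hk : k < l.length) (v d : V) :
    (l.set k v).getD k d = v := by
  simp [List.getD_eq_getElem?_getD, List.getElem?_set, hk]
lemma set_getD_self (l : List V) {k : ℕ} (hk : k < l.length) :
    l.set k (l.getD k 0) = l := by
  rw [List.getD_eq_getElem l 0 hk]
  exact List.ext_getElem (by simp) (fun n h1 h2 => by rw [List.getElem_set]; split <;> simp_all)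

lemma Rpow_set_zero : ∀ (p : ℕ) (l : List V) (k : ℕ), l.length = 2*p+2 → k < l.length →
    Rpow h S ω p (l.set k 0) = 0 := by
  intro p
  induction p with
  | zero =>
    intro l k hl hk
    rcases l with _ | ⟨x, l⟩; · simp at hl
    rcases l with _ | ⟨y, l⟩; · simp at hl
    rcases l with _ | ⟨z, l⟩
    · norm_num at hk
      interval_cases k <;> simp [Rpow_zero_apply]
    · simp at hl
  | succ p IH =>
    intro l k hl hk
    rcases l with _ | ⟨X, l⟩; · simp at hl
    rcases l with _ | ⟨Y, Zs⟩; · simp at hl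
    have hZs : Zs.length = 2*p+2 := by simp at hl; omega
    match k with
    | 0 =>
      show Rpow h S ω (p+1) (0 :: Y :: Zs) = 0
      rw [Rpow_succ_apply, neg_eq_zero]
      refine Finset.sum_eq_zero fun i hi => ?_
      have : RR h S 0 Y (Zs.getD i 0) = 0 := by simp [RR]
      rw [this]
      exact IH Zs i hZs (by simpa [hZs] using Finset.mem_range.mp hi)
    | 1 =>
      show Rpow h S ω (p+1) (X :: 0 :: Zs) = 0
      rw [Rpow_succ_apply, neg_eq_zero]
      refine Finset.sum_eq_zero fun i hi => ?_
      have : RR h S X 0 (Zs.getD i 0) = 0 := by simp [RR]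
      rw [this]
      exact IH Zs i hZs (by simpa [hZs] using Finset.mem_range.mp hi)
    | k+2 =>
      have hk' : k < Zs.length := by simp at hk; omega
      show Rpow h S ω (p+1) (X :: Y :: Zs.set k 0) = 0
      rw [Rpow_succ_apply, neg_eq_zero, List.length_set]
      refine Finset.sum_eq_zero fun i hi => ?_
      have hi' : i < Zs.length := Finset.mem_range.mp hi
      by_cases hik : i = k
      · subst hik
        rw [getD_set_self _ hk', RR_zero_arg, List.set_set]
        exact IH Zs i hZs hi'
      · rw [getD_set_ne _ (Ne.symm hik), List.set_comm _ _ (Ne.symm hik)]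
        exact IH (Zs.set i _) k (by rw [List.length_set]; exact hZs)
          (by rw [List.length_set]; omega)

lemma Rpow_set_add_smul : ∀ (p : ℕ) (l : List V) (k : ℕ) (c d : ℝ) (u v : V),
    l.length = 2*p+2 → k < l.length →
    Rpow h S ω p (l.set k (c • u + d • v)) =
      c * Rpow h S ω p (l.set k u) + d * Rpow h S ω p (l.set k v) := by
  intro p
  induction p with
  | zero =>
    intro l k c d u v hl hk
    rcases l with _ | ⟨x, l⟩; · simp at hl
    rcases l with _ | ⟨y, l⟩; · simp at hl
    rcases l with _ | ⟨z, l⟩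
    · norm_num at hk
      interval_cases k <;>
        simp [Rpow_zero_apply, map_add, map_smul, LinearMap.add_apply, LinearMap.smul_apply,
          smul_eq_mul]
    · simp at hl
  | succ p IH =>
    intro l k c d u v hl hk
    rcases l with _ | ⟨X, l⟩; · simp at hl
    rcases l with _ | ⟨Y, Zs⟩; · simp at hl
    have hZs : Zs.length = 2*p+2 := by simp at hl; omega
    match k with
    | 0 =>
      show Rpow h S ω (p+1) ((c • u + d • v) :: Y :: Zs) = c * Rpow h S ω (p+1) (u :: Y :: Zs) + d * Rpow h S ω (p+1) (v :: Y :: Zs)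
      rw [Rpow_succ_apply, Rpow_succ_apply, Rpow_succ_apply]
      have key : ∀ i ∈ Finset.range Zs.length,
          Rpow h S ω p (Zs.set i (RR h S (c • u + d • v) Y (Zs.getD i 0))) =
          c * Rpow h S ω p (Zs.set i (RR h S u Y (Zs.getD i 0)))
            + d * Rpow h S ω p (Zs.set i (RR h S v Y (Zs.getD i 0))) := by
        intro i hi
        rw [RR_lin_left]
        exact IH Zs i c d _ _ hZs (Finset.mem_range.mp hi)
      rw [Finset.sum_congr rfl key, Finset.sum_add_distrib, ← Finset.mul_sum, ← Finset.mul_sum]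
      ring
    | 1 =>
      show Rpow h S ω (p+1) (X :: (c • u + d • v) :: Zs) = c * Rpow h S ω (p+1) (X :: u :: Zs) + d * Rpow h S ω (p+1) (X :: v :: Zs)
      rw [Rpow_succ_apply, Rpow_succ_apply, Rpow_succ_apply]
      have key : ∀ i ∈ Finset.range Zs.length,
          Rpow h S ω p (Zs.set i (RR h S X (c • u + d • v) (Zs.getD i 0))) =
          c * Rpow h S ω p (Zs.set i (RR h S X u (Zs.getD i 0)))
            + d * Rpow h S ω p (Zs.set i (RR h S X v (Zs.getD i 0))) := by
        intro i hi
        rw [RR_lin_mid]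
        exact IH Zs i c d _ _ hZs (Finset.mem_range.mp hi)
      rw [Finset.sum_congr rfl key, Finset.sum_add_distrib, ← Finset.mul_sum, ← Finset.mul_sum]
      ring
    | k+2 =>
      have hk' : k < Zs.length := by simp at hk; omega
      show Rpow h S ω (p+1) (X :: Y :: Zs.set k (c • u + d • v)) =
        c * Rpow h S ω (p+1) (X :: Y :: Zs.set k u) + d * Rpow h S ω (p+1) (X :: Y :: Zs.set k v)
      rw [Rpow_succ_apply, Rpow_succ_apply, Rpow_succ_apply,
        List.length_set, List.length_set, List.length_set]
      have key : ∀ i ∈ Finset.range Zs.length,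
          Rpow h S ω p ((Zs.set k (c • u + d • v)).set i
            (RR h S X Y ((Zs.set k (c • u + d • v)).getD i 0))) =
          c * Rpow h S ω p ((Zs.set k u).set i (RR h S X Y ((Zs.set k u).getD i 0)))
            + d * Rpow h S ω p ((Zs.set k v).set i (RR h S X Y ((Zs.set k v).getD i 0))) := by
        intro i hi
        have hi' : i < Zs.length := Finset.mem_range.mp hi
        by_cases hik : i = k
        · subst hik
          rw [getD_set_self _ hk', getD_set_self _ hk', getD_set_self _ hk',
            List.set_set, List.set_set, List.set_set, RR_lin_arg]
          exact IH Zs i c d _ _ hZs hi'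
        · rw [getD_set_ne _ (Ne.symm hik), getD_set_ne _ (Ne.symm hik),
            getD_set_ne _ (Ne.symm hik),
            List.set_comm _ _ (Ne.symm hik), List.set_comm _ _ (Ne.symm hik),
            List.set_comm _ _ (Ne.symm hik)]
          exact IH (Zs.set i _) k c d u v (by rw [List.length_set]; exact hZs)
            (by rw [List.length_set]; omega)
      rw [Finset.sum_congr rfl key, Finset.sum_add_distrib, ← Finset.mul_sum, ← Finset.mul_sum]
      ring
end Helpers

section Claims
variable {V : Type*} [AddCommGroup V] [Module ℝ V]
  (h : V →ₗ[ℝ] V →ₗ[ℝ] ℝ) (S : V →ₗ[ℝ] V) (ω : V →ₗ[ℝ] V →ₗ[ℝ] ℝ)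

lemma pairListLen (X Y : V) : ∀ p, (pairList X Y p).length = 2 * p
  | 0 => rfl
  | p+1 => by simp [pairList, pairListLen X Y p]; omega

lemma pairList_append_getD_even (X Y : V) (t : List V) :
    ∀ u m, u < m → ((pairList X Y m ++ t).getD (2*u) 0 = X) := by
  intro u
  induction u with
  | zero =>
    intro m hm
    cases m with
    | zero => omega
    | succ m' => simp [pairList]
  | succ u IHu =>
    intro m hm
    cases m with
    | zero => omega
    | succ m' =>
      have h2 : 2*(u+1) = (2*u)+1+1 := by ring
      rw [h2]
      show (X :: Y :: (pairList X Y m' ++ t)).getD (2*u+1+1) 0 = X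
      rw [List.getD_cons_succ, List.getD_cons_succ]
      exact IHu m' (by omega)

lemma pairList_append_getD_odd (X Y : V) (t : List V) :
    ∀ u m, u < m → ((pairList X Y m ++ t).getD (2*u+1) 0 = Y) := by
  intro u
  induction u with
  | zero =>
    intro m hm
    cases m with
    | zero => omega
    | succ m' => simp [pairList]
  | succ u IHu =>
    intro m hm
    cases m with
    | zero => omega
    | succ m' =>
      have h2 : 2*(u+1)+1 = (2*u+1)+1+1 := by ring
      rw [h2]
      show (X :: Y :: (pairList X Y m' ++ t)).getD (2*u+1+1+1) 0 = Y
      rw [List.getD_cons_succ, List.getD_cons_succ]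
      exact IHu m' (by omega)

lemma pairList_set_odd (X Y : V) (t : List V) (v : V) :
    ∀ u m, u < m → (pairList X Y m ++ t).set (2*u+1) v =
      pairList X Y u ++ X :: v :: (pairList X Y (m-u-1) ++ t) := by
  intro u
  induction u with
  | zero =>
    intro m hm
    cases m with
    | zero => omega
    | succ m' =>
      show (X :: Y :: (pairList X Y m' ++ t)).set 1 v = _
      simp [pairList]
  | succ u IHu =>
    intro m hm
    cases m with
    | zero => omega
    | succ m' =>
      have h2 : 2*(u+1)+1 = (2*u+1)+1+1 := by ring
      rw [h2]
      show (X :: Y :: (pairList X Y m' ++ t)).set (2*u+1+1+1) v = _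
      rw [List.set_cons_succ, List.set_cons_succ, IHu m' (by omega)]
      show pairList X Y (u+1) ++ _ = _
      simp [pairList]
  

lemma pairList_append_getD_right (X Y : V) (t : List V) (m k : ℕ) :
    (pairList X Y m ++ t).getD (2*m+k) 0 = t.getD k 0 := by
  rw [List.getD_append_right _ _ _ _ (by rw [pairListLen]; omega)]
  rw [pairListLen]
  congr 1
  omega

lemma pairList_append_set_right (X Y : V) (t : List V) (m k : ℕ) (v : V) :
    (pairList X Y m ++ t).set (2*m+k) v = pairList X Y m ++ t.set k v := by
  rw [List.set_append, if_neg (by rw [pairListLen]; omega)]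
  congr 2
  rw [pairListLen]
  omega

lemma sum_range_two_mul (f : ℕ → ℝ) (c : ℝ) :
    ∀ m, (∀ u, u < m → f (2*u) = 0) → (∀ u, u < m → f (2*u+1) = c) →
      ∑ i ∈ Finset.range (2*m), f i = m * c := by
  intro m
  induction m with
  | zero => simp
  | succ m IH =>
    intro h0 h1
    rw [show 2*(m+1) = (2*m+1)+1 by ring, Finset.sum_range_succ, Finset.sum_range_succ]
    rw [IH (fun u hu => h0 u (by omega)) (fun u hu => h1 u (by omega)),
      h0 m (by omega), h1 m (by omega)]
    push_cast
    ring

lemma claimZ (A B : V) (α ε : ℝ)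
    (hωAA : ω A A = 0)
    (hRA : RR h S A B A = 0)
    (hRB : RR h S A B B = (ε*α) • A + ε • B) :
    ∀ (q s : ℕ) (r : List V), 2*s + 2 + r.length = 2*q + 2 →
      Rpow h S ω q (pairList A B s ++ A :: A :: r) = 0 := by
  intro q
  induction q with
  | zero =>
    intro s r hlen
    have hs : s = 0 := by omega
    have hr : r = [] := by
      cases r with
      | nil => rfl
      | cons a r => simp at hlen; omega
    subst hs; subst hr
    simp [pairList, Rpow_zero_apply, hωAA]
  | succ q IH =>
    intro s r hlen
    cases s with
    | zero =>
      have hr : r.length = 2*q+2 := by omega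
      show Rpow h S ω (q+1) (A :: A :: r) = 0
      rw [Rpow_succ_apply, neg_eq_zero]
      refine Finset.sum_eq_zero fun i hi => ?_
      rw [RR_self]
      exact Rpow_set_zero h S ω q r i hr (by rw [hr]; exact hr ▸ Finset.mem_range.mp hi)
    | succ s' =>
      have hZ : (pairList A B s' ++ A :: A :: r).length = 2*q+2 := by
        simp [pairListLen]; omega
      show Rpow h S ω (q+1) (A :: B :: (pairList A B s' ++ A :: A :: r)) = 0
      rw [Rpow_succ_apply, neg_eq_zero]
      refine Finset.sum_eq_zero fun i hi => ?_
      have hi' : i < (pairList A B s' ++ A :: A :: r).length := Finset.mem_range.mp hi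
      rcases Nat.lt_or_ge i (2*s') with hlt | hge
      · rcases Nat.even_or_odd i with ⟨u, hu⟩ | ⟨u, hu⟩
        · have hu2 : i = 2*u := by omega
          subst hu2
          rw [pairList_append_getD_even A B _ u s' (by omega), hRA]
          exact Rpow_set_zero h S ω q _ _ hZ hi'
        · have hu2 : i = 2*u+1 := by omega
          subst hu2
          rw [pairList_append_getD_odd A B _ u s' (by omega), hRB,
            Rpow_set_add_smul h S ω q _ _ (ε*α) ε A B hZ hi']
          have h1 : (pairList A B s' ++ A :: A :: r).set (2*u+1) A =
              pairList A B u ++ A :: A :: (pairList A B (s'-u-1) ++ A :: A :: r) :=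
            pairList_set_odd A B _ A u s' (by omega)
          have h2' : ∀ (L : List V), L.getD (2*u+1) 0 = B → 2*u+1 < L.length →
              L.set (2*u+1) B = L := fun L hg hL => by rw [← hg]; exact set_getD_self L hL
          have h2 : (pairList A B s' ++ A :: A :: r).set (2*u+1) B =
              pairList A B s' ++ A :: A :: r :=
            h2' _ (pairList_append_getD_odd A B (A :: A :: r) u s' (by omega)) hi'
          rw [h1, h2, IH u _ (by simp [pairListLen] at hZ ⊢; omega), IH s' r (by omega)]
          ring
      · have hrep : i = 2*s' + (i - 2*s') := by omega
        rcases Nat.lt_or_ge (i - 2*s') 2 with hsm | hbig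
        · -- hits one of the two A's
          have hval : (pairList A B s' ++ A :: A :: r).getD i 0 = A := by
            rw [hrep, pairList_append_getD_right]
            interval_cases hh : (i - 2*s') <;> rfl
          rw [hval, hRA]
          exact Rpow_set_zero h S ω q _ _ hZ hi'
        · -- inside r
          obtain ⟨k, hk⟩ : ∃ k, i = 2*s' + (k + 2) := ⟨i - 2*s' - 2, by omega⟩
          subst hk
          rw [show (pairList A B s' ++ A :: A :: r).set (2*s'+(k+2))
                (RR h S A B ((pairList A B s' ++ A :: A :: r).getD (2*s'+(k+2)) 0)) =
              pairList A B s' ++ A :: A :: r.set k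
                (RR h S A B ((pairList A B s' ++ A :: A :: r).getD (2*s'+(k+2)) 0)) from by
            rw [pairList_append_set_right, List.set_cons_succ, List.set_cons_succ]]
          exact IH s' _ (by simp; omega)

lemma claimH (A B ei ej : V) (α ε : ℝ)
    (hωAA : ω A A = 0)
    (hRA : RR h S A B A = 0)
    (hRB : RR h S A B B = (ε*α) • A + ε • B)
    (hRi : RR h S A B ei = 0)
    (hRj : RR h S A B ej = 0) :
    ∀ q, Rpow h S ω (q+2) (pairList A B (q+1) ++ [A, ei, A, ej]) = 0 := by
  intro q
  induction q with
  | zero =>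
    show Rpow h S ω (1+1) (A :: B :: ([] ++ [A, ei, A, ej])) = 0
    rw [List.nil_append, Rpow_succ_apply, neg_eq_zero]
    refine Finset.sum_eq_zero fun i hi => ?_
    have hi' : i < 4 := by simpa using Finset.mem_range.mp hi
    have hlen : ([A, ei, A, ej] : List V).length = 2*1+2 := by simp
    interval_cases i
    · rw [show ([A, ei, A, ej] : List V).getD 0 0 = A from rfl, hRA]
      exact Rpow_set_zero h S ω 1 _ 0 hlen (by simp)
    · rw [show ([A, ei, A, ej] : List V).getD 1 0 = ei from rfl, hRi]
      exact Rpow_set_zero h S ω 1 _ 1 hlen (by simp)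
    · rw [show ([A, ei, A, ej] : List V).getD 2 0 = A from rfl, hRA]
      exact Rpow_set_zero h S ω 1 _ 2 hlen (by simp)
    · rw [show ([A, ei, A, ej] : List V).getD 3 0 = ej from rfl, hRj]
      exact Rpow_set_zero h S ω 1 _ 3 hlen (by simp)
  | succ q IH =>
    have hZ : (pairList A B (q+1) ++ [A, ei, A, ej]).length = 2*(q+2)+2 := by
      simp [pairListLen]; omega
    show Rpow h S ω ((q+2)+1) (A :: B :: (pairList A B (q+1) ++ [A, ei, A, ej])) = 0
    rw [Rpow_succ_apply, neg_eq_zero]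
    refine Finset.sum_eq_zero fun i hi => ?_
    have hi' : i < (pairList A B (q+1) ++ [A, ei, A, ej]).length := Finset.mem_range.mp hi
    rcases Nat.lt_or_ge i (2*(q+1)) with hlt | hge
    · rcases Nat.even_or_odd i with ⟨u, hu⟩ | ⟨u, hu⟩
      · have hu2 : i = 2*u := by omega
        subst hu2
        rw [pairList_append_getD_even A B _ u (q+1) (by omega), hRA]
        exact Rpow_set_zero h S ω (q+2) _ _ hZ hi'
      · have hu2 : i = 2*u+1 := by omega
        subst hu2
        rw [pairList_append_getD_odd A B _ u (q+1) (by omega), hRB,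
          Rpow_set_add_smul h S ω (q+2) _ _ (ε*α) ε A B hZ hi']
        have h1 : (pairList A B (q+1) ++ [A, ei, A, ej]).set (2*u+1) A =
            pairList A B u ++ A :: A :: (pairList A B (q+1-u-1) ++ [A, ei, A, ej]) :=
          pairList_set_odd A B _ A u (q+1) (by omega)
        have h2' : ∀ (L : List V), L.getD (2*u+1) 0 = B → 2*u+1 < L.length →
            L.set (2*u+1) B = L := fun L hg hL => by rw [← hg]; exact set_getD_self L hL
        have h2 : (pairList A B (q+1) ++ [A, ei, A, ej]).set (2*u+1) B =
            pairList A B (q+1) ++ [A, ei, A, ej] :=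
          h2' _ (pairList_append_getD_odd A B _ u (q+1) (by omega)) hi'
        rw [h1, h2, IH,
          claimZ h S ω A B α ε hωAA hRA hRB (q+2) u _ (by simp [pairListLen]; omega)]
        ring
    · have hval : ∀ k, k < 4 → ([A, ei, A, ej] : List V).getD k 0 =
          [A, ei, A, ej].getD k 0 := fun _ _ => rfl
      obtain ⟨k, hk, hk4⟩ : ∃ k, i = 2*(q+1) + k ∧ k < 4 := by
        refine ⟨i - 2*(q+1), by omega, ?_⟩
        simp [pairListLen] at hi'
        omega
      subst hk
      rw [pairList_append_getD_right]
      interval_cases k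
      · rw [show ([A, ei, A, ej] : List V).getD 0 0 = A from rfl, hRA]
        exact Rpow_set_zero h S ω (q+2) _ _ hZ hi'
      · rw [show ([A, ei, A, ej] : List V).getD 1 0 = ei from rfl, hRi]
        exact Rpow_set_zero h S ω (q+2) _ _ hZ hi'
      · rw [show ([A, ei, A, ej] : List V).getD 2 0 = A from rfl, hRA]
        exact Rpow_set_zero h S ω (q+2) _ _ hZ hi'
      · rw [show ([A, ei, A, ej] : List V).getD 3 0 = ej from rfl, hRj]
        exact Rpow_set_zero h S ω (q+2) _ _ hZ hi'

lemma claimF (A B ei ej E3 : V) (α ε γ : ℝ)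
    (hωAA : ω A A = 0)
    (hRA : RR h S A B A = 0)
    (hRB : RR h S A B B = (ε*α) • A + ε • B)
    (hRi : RR h S A B ei = 0)
    (hRj : RR h S A B ej = 0)
    (hBeiA : RR h S B ei A = 0)
    (hAeiA : RR h S A ei A = 0)
    (hBeiej : RR h S B ei ej = γ • (α • B + E3))
    (hAeiej : RR h S A ei ej = γ • (α • A + B)) :
    ∀ m, Rpow h S ω (m+2) (pairList A B (m+1) ++ [B, ei, A, ej]) =
      (-1)^(m+2) * ε^(m+1) * (Nat.factorial (m+1) : ℝ) * γ *
        (2*α*(ω A B) + ω A E3) := by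
  have rank1 : ∀ (u w : V), RR h S u ei A = 0 → RR h S u ei ej = w →
      Rpow h S ω 1 [u, ei, A, ej] = -(ω A w) := by
    intro u w h1 h2
    show Rpow h S ω (0+1) (u :: ei :: [A, ej]) = _
    rw [Rpow_succ_apply,
      show ([A, ej] : List V).length = 1+1 from rfl,
      Finset.sum_range_succ, Finset.sum_range_succ, Finset.sum_range_zero,
      show ([A, ej] : List V).getD 0 0 = A from rfl,
      show ([A, ej] : List V).getD 1 0 = ej from rfl, h1, h2]
    simp [Rpow_zero_apply]
  have hF1 : Rpow h S ω 1 [B, ei, A, ej] = -(γ * (α * ω A B + ω A E3)) := by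
    rw [rank1 B _ hBeiA hBeiej]
    simp [map_add, map_smul, smul_eq_mul]
    ring
  have hH1 : Rpow h S ω 1 [A, ei, A, ej] = -(γ * ω A B) := by
    rw [rank1 A _ hAeiA hAeiej]
    simp [map_add, map_smul, smul_eq_mul, hωAA]
  intro m
  induction m with
  | zero =>
    show Rpow h S ω (1+1) (A :: B :: [B, ei, A, ej]) = _
    rw [Rpow_succ_apply,
      show ([B, ei, A, ej] : List V).length = 3+1 from rfl,
      Finset.sum_range_succ,
      show (3:ℕ) = 2+1 from rfl, Finset.sum_range_succ,
      show (2:ℕ) = 1+1 from rfl, Finset.sum_range_succ,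
      Finset.sum_range_succ, Finset.sum_range_zero,
      show ([B, ei, A, ej] : List V).getD 0 0 = B from rfl,
      show ([B, ei, A, ej] : List V).getD 1 0 = ei from rfl,
      show ([B, ei, A, ej] : List V).getD 2 0 = A from rfl,
      show ([B, ei, A, ej] : List V).getD 3 0 = ej from rfl,
      hRB, hRi, hRA, hRj,
      Rpow_set_add_smul h S ω 1 [B, ei, A, ej] 0 (ε*α) ε A B (by norm_num) (by norm_num),
      show ([B, ei, A, ej] : List V).set 0 A = [A, ei, A, ej] from rfl,
      show ([B, ei, A, ej] : List V).set 0 B = [B, ei, A, ej] from rfl,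
      Rpow_set_zero h S ω 1 [B, ei, A, ej] 1 (by norm_num) (by norm_num),
      Rpow_set_zero h S ω 1 [B, ei, A, ej] 2 (by norm_num) (by norm_num),
      Rpow_set_zero h S ω 1 [B, ei, A, ej] 3 (by norm_num) (by norm_num),
      hF1, hH1]
    simp [Nat.factorial]
    ring
  | succ m IH =>
    have hZ : (pairList A B (m+1) ++ [B, ei, A, ej]).length = 2*(m+1)+4 := by
      simp [pairListLen]
    have hZ2 : (pairList A B (m+1) ++ [B, ei, A, ej]).length = 2*(m+2)+2 := by
      simp [pairListLen]; omega
    show Rpow h S ω ((m+2)+1) (A :: B :: (pairList A B (m+1) ++ [B, ei, A, ej])) = _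
    rw [Rpow_succ_apply, hZ,
      show 2*(m+1)+4 = (2*(m+1)+3)+1 by omega, Finset.sum_range_succ,
      show 2*(m+1)+3 = (2*(m+1)+2)+1 by omega, Finset.sum_range_succ,
      show 2*(m+1)+2 = (2*(m+1)+1)+1 by omega, Finset.sum_range_succ,
      Finset.sum_range_succ]
    have h2' : ∀ (L : List V) (k : ℕ), L.getD k 0 = B → k < L.length →
        L.set k B = L := fun L k hg hL => by rw [← hg]; exact set_getD_self L hL
    -- the leading pair region
    have h0 : ∀ u, u < m+1 →
        Rpow h S ω (m+2) ((pairList A B (m+1) ++ [B, ei, A, ej]).set (2*u)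
          (RR h S A B ((pairList A B (m+1) ++ [B, ei, A, ej]).getD (2*u) 0))) = 0 := by
      intro u hu
      rw [pairList_append_getD_even A B _ u (m+1) hu, hRA]
      exact Rpow_set_zero h S ω (m+2) _ _ hZ2 (by rw [hZ]; omega)
    have h1 : ∀ u, u < m+1 →
        Rpow h S ω (m+2) ((pairList A B (m+1) ++ [B, ei, A, ej]).set (2*u+1)
          (RR h S A B ((pairList A B (m+1) ++ [B, ei, A, ej]).getD (2*u+1) 0))) =
        ε * ((-1)^(m+2) * ε^(m+1) * (Nat.factorial (m+1) : ℝ) * γ *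
          (2*α*(ω A B) + ω A E3)) := by
      intro u hu
      rw [pairList_append_getD_odd A B _ u (m+1) hu, hRB,
        Rpow_set_add_smul h S ω (m+2) _ _ (ε*α) ε A B hZ2 (by rw [hZ]; omega),
        pairList_set_odd A B _ A u (m+1) hu,
        h2' _ _ (pairList_append_getD_odd A B _ u (m+1) hu) (by rw [hZ]; omega),
        claimZ h S ω A B α ε hωAA hRA hRB (m+2) u _ (by simp [pairListLen]; omega),
        IH]
      ring
    have hsum := sum_range_two_mul
      (fun i => Rpow h S ω (m+2) ((pairList A B (m+1) ++ [B, ei, A, ej]).set i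
        (RR h S A B ((pairList A B (m+1) ++ [B, ei, A, ej]).getD i 0))))
      (ε * ((-1)^(m+2) * ε^(m+1) * (Nat.factorial (m+1) : ℝ) * γ *
        (2*α*(ω A B) + ω A E3))) (m+1) h0 h1
    rw [hsum]
    -- tail term at index 2*(m+1) : the B
    have e0 : (pairList A B (m+1) ++ [B, ei, A, ej]).getD (2*(m+1)) 0 = B := by
      simpa using pairList_append_getD_right A B [B, ei, A, ej] (m+1) 0
    have s0A : (pairList A B (m+1) ++ [B, ei, A, ej]).set (2*(m+1)) A =
        pairList A B (m+1) ++ [A, ei, A, ej] := by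
      simpa using pairList_append_set_right A B [B, ei, A, ej] (m+1) 0 A
    rw [e0, hRB,
      Rpow_set_add_smul h S ω (m+2) _ _ (ε*α) ε A B hZ2 (by rw [hZ]; omega),
      s0A, h2' _ _ e0 (by rw [hZ]; omega),
      claimH h S ω A B ei ej α ε hωAA hRA hRB hRi hRj m, IH]
    -- tail terms at 2*(m+1)+1, +2, +3
    have e1 : (pairList A B (m+1) ++ [B, ei, A, ej]).getD (2*(m+1)+1) 0 = ei :=
      pairList_append_getD_right A B [B, ei, A, ej] (m+1) 1
    have e2 : (pairList A B (m+1) ++ [B, ei, A, ej]).getD (2*(m+1)+2) 0 = A :=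
      pairList_append_getD_right A B [B, ei, A, ej] (m+1) 2
    have e3 : (pairList A B (m+1) ++ [B, ei, A, ej]).getD (2*(m+1)+3) 0 = ej :=
      pairList_append_getD_right A B [B, ei, A, ej] (m+1) 3
    rw [e1, e2, e3, hRi, hRA, hRj,
      Rpow_set_zero h S ω (m+2) _ _ hZ2 (by rw [hZ]; omega),
      Rpow_set_zero h S ω (m+2) _ _ hZ2 (by rw [hZ]; omega),
      Rpow_set_zero h S ω (m+2) _ _ hZ2 (by rw [hZ]; omega)]
    push_cast [Nat.factorial_succ]
    ring
end Claims


theorem stmt12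
    {V : Type*} [AddCommGroup V] [Module ℝ V]
    (n : ℕ) (hn : 2 ≤ n) (e : ℕ → V)
    (hbasis : ∃ b : Module.Basis (Fin (2 * n)) ℝ V, ∀ i : Fin (2 * n), b i = e (i.1 + 1))
    (h ω : V →ₗ[ℝ] V →ₗ[ℝ] ℝ)
    (hsymm : ∀ X Y, h X Y = h Y X)
    (halt : ∀ X, ω X X = 0)
    (S : V →ₗ[ℝ] V)
    (α ε : ℝ) (hε : ε = 1 ∨ ε = -1)
    (hS1 : S (e 1) = α • e 1 + e 2)
    (hS2 : S (e 2) = α • e 2 + e 3)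
    (hS3 : S (e 3) = α • e 3)
    (hh13 : h (e 1) (e 3) = ε) (hh31 : h (e 3) (e 1) = ε) (hh22 : h (e 2) (e 2) = ε)
    (hh0 : ∀ i j, 1 ≤ i → i ≤ 2 * n → 1 ≤ j → j ≤ 2 * n → min i j ≤ 3 →
      ¬((i = 1 ∧ j = 3) ∨ (i = 3 ∧ j = 1) ∨ (i = 2 ∧ j = 2)) → h (e i) (e j) = 0)
    (p : ℕ) (hp : 2 ≤ p)
    (i j : ℕ) (hi3 : 3 < i) (hi : i ≤ 2 * n) (hj3 : 3 < j) (hj : j ≤ 2 * n) :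
    Rpow h S ω p (pairList (e 1) (e 2) (p - 1) ++ [e 2, e i, e 1, e j]) =
      (-1) ^ p * ε ^ (p - 1) * (Nat.factorial (p - 1) : ℝ) * h (e i) (e j) *
        (2 * α * ω (e 1) (e 2) + ω (e 1) (e 3)) := by
  have h4n : 4 ≤ 2 * n := by omega
  have h11 : h (e 1) (e 1) = 0 := hh0 1 1 (by omega) (by omega) (by omega) (by omega) (by omega) (by omega)
  have h12 : h (e 1) (e 2) = 0 := hh0 1 2 (by omega) (by omega) (by omega) (by omega) (by omega) (by omega)
  have h21 : h (e 2) (e 1) = 0 := hh0 2 1 (by omega) (by omega) (by omega) (by omega) (by omega) (by omega)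
  have h1i : h (e 1) (e i) = 0 := hh0 1 i (by omega) (by omega) (by omega) hi (by omega) (by omega)
  have h2i : h (e 2) (e i) = 0 := hh0 2 i (by omega) (by omega) (by omega) hi (by omega) (by omega)
  have hi1 : h (e i) (e 1) = 0 := hh0 i 1 (by omega) hi (by omega) (by omega) (by omega) (by omega)
  have h1j : h (e 1) (e j) = 0 := hh0 1 j (by omega) (by omega) (by omega) hj (by omega) (by omega)
  have h2j : h (e 2) (e j) = 0 := hh0 2 j (by omega) (by omega) (by omega) hj (by omega) (by omega)
  have hωAA : ω (e 1) (e 1) = 0 := halt _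
  have hRA : RR h S (e 1) (e 2) (e 1) = 0 := by
    simp only [RR]; rw [h21, h11]; simp
  have hRB : RR h S (e 1) (e 2) (e 2) = (ε*α) • e 1 + ε • e 2 := by
    simp only [RR]; rw [hh22, h12, hS1]; simp [smul_add, smul_smul]
  have hRi : RR h S (e 1) (e 2) (e i) = 0 := by
    simp only [RR]; rw [h2i, h1i]; simp
  have hRj : RR h S (e 1) (e 2) (e j) = 0 := by
    simp only [RR]; rw [h2j, h1j]; simp
  have hBeiA : RR h S (e 2) (e i) (e 1) = 0 := by
    simp only [RR]; rw [hi1, h21]; simp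
  have hAeiA : RR h S (e 1) (e i) (e 1) = 0 := by
    simp only [RR]; rw [hi1, h11]; simp
  have hBeiej : RR h S (e 2) (e i) (e j) = (h (e i) (e j)) • (α • e 2 + e 3) := by
    simp only [RR]; rw [hS2, h2j]; simp
  have hAeiej : RR h S (e 1) (e i) (e j) = (h (e i) (e j)) • (α • e 1 + e 2) := by
    simp only [RR]; rw [hS1, h1j]; simp
  obtain ⟨m, rfl⟩ : ∃ m, p = m + 2 := ⟨p - 2, by omega⟩
  rw [show m + 2 - 1 = m + 1 by omega]
  exact claimF h S ω (e 1) (e 2) (e i) (e j) (e 3) α ε (h (e i) (e j))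
    hωAA hRA hRB hRi hRj hBeiA hAeiA hBeiej hAeiej m
end
end

section
/- Assume α = 0. For every p ≥ 1: (R^p·ω)(e_1, e_2, …, e_1, e_2, e_2, e_3, e_1, e_2), with p−1 leading pairs (e_1, e_2) followed by e_2, e_3, e_1, e_2, equals (−1)^{p+1} ε^p (p−1)! ω(e_2, e_3). -/
noncomputable section

section Aux

variable {V : Type*} [AddCommGroup V] [Module ℝ V]
  (h : V →ₗ[ℝ] V →ₗ[ℝ] ℝ) (S : V →ₗ[ℝ] V)

theorem RAct_cons (T : List V → ℝ) (X Y : V) (Zs : List V) :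
    RAct h S T (X :: Y :: Zs)
      = -∑ i ∈ Finset.range Zs.length, T (Zs.set i (RR h S X Y (Zs.getD i 0))) := rfl

theorem Rpow_succ (ω : V →ₗ[ℝ] V →ₗ[ℝ] ℝ) (q : ℕ) :
    Rpow h S ω (q + 1) = RAct h S (Rpow h S ω q) :=
  Function.iterate_succ_apply' (RAct h S) q _

theorem RR_smul_left (c : ℝ) (X Y Z : V) : RR h S (c • X) Y Z = c • RR h S X Y Z := by
  simp only [RR, map_smul, LinearMap.smul_apply, smul_eq_mul]
  module

theorem RR_smul_mid (c : ℝ) (X Y Z : V) : RR h S X (c • Y) Z = c • RR h S X Y Z := by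
  simp only [RR, map_smul, LinearMap.smul_apply, smul_eq_mul]
  module

theorem RR_smul_arg (c : ℝ) (X Y Z : V) : RR h S X Y (c • Z) = c • RR h S X Y Z := by
  simp only [RR, map_smul, smul_eq_mul]
  module

def HomogN (m : ℕ) (T : List V → ℝ) : Prop :=
  ∀ (l : List V) (i : ℕ) (c : ℝ) (v : V), l.length = m → i < m →
    T (l.set i (c • v)) = c * T (l.set i v)

theorem HomogN.set' {m : ℕ} {T : List V → ℝ} (hT : HomogN m T)
    (zs : List V) (hzs : zs.length = m) (i : ℕ) (hi : i < m) (c : ℝ) (w : V) :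
    T (zs.set i (c • w)) = c * T (zs.set i w) := by
  have := hT (zs.set i w) i c w (by simp [hzs]) hi
  rwa [List.set_set, List.set_set] at this

theorem homogN_base (ω : V →ₗ[ℝ] V →ₗ[ℝ] ℝ) :
    HomogN 2 (fun l => ω (l.getD 0 0) (l.getD 1 0)) := by
  rintro l i c v hl hi
  rcases l with _ | ⟨x, _ | ⟨y, _ | ⟨z, t⟩⟩⟩ <;> simp_all
  interval_cases i <;> simp [List.getD, map_smul]

theorem homogN_RAct {m : ℕ} {T : List V → ℝ} (hT : HomogN m T) :
    HomogN (m + 2) (RAct h S T) := by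
  rintro l i c v hl hi
  rcases l with _ | ⟨x, _ | ⟨y, zs⟩⟩
  · simp at hl
  · simp only [List.length_cons, List.length_nil] at hl; omega
  have hzs : zs.length = m := by simpa using hl
  match i with
  | 0 =>
      simp only [List.set]
      rw [RAct_cons, RAct_cons]
      have : ∀ j ∈ Finset.range zs.length,
          T (zs.set j (RR h S (c • v) y (zs.getD j 0)))
            = c * T (zs.set j (RR h S v y (zs.getD j 0))) := by
        intro j hj
        rw [RR_smul_left]
        exact hT.set' zs hzs j (by rw [← hzs]; exact Finset.mem_range.mp hj) c _
      rw [Finset.sum_congr rfl this, ← Finset.mul_sum]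
      ring
  | 1 =>
      simp only [List.set]
      rw [RAct_cons, RAct_cons]
      have : ∀ j ∈ Finset.range zs.length,
          T (zs.set j (RR h S x (c • v) (zs.getD j 0)))
            = c * T (zs.set j (RR h S x v (zs.getD j 0))) := by
        intro j hj
        rw [RR_smul_mid]
        exact hT.set' zs hzs j (by rw [← hzs]; exact Finset.mem_range.mp hj) c _
      rw [Finset.sum_congr rfl this, ← Finset.mul_sum]
      ring
  | (i + 2) =>
      have him : i < m := by omega
      have hiz : i < zs.length := by omega
      simp only [List.set]
      rw [RAct_cons, RAct_cons, List.length_set, List.length_set]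
      have : ∀ j ∈ Finset.range zs.length,
          T ((zs.set i (c • v)).set j (RR h S x y ((zs.set i (c • v)).getD j 0)))
            = c * T ((zs.set i v).set j (RR h S x y ((zs.set i v).getD j 0))) := by
        intro j hj
        have hjz : j < zs.length := Finset.mem_range.mp hj
        by_cases hji : j = i
        · subst hji
          rw [List.set_set, List.set_set]
          have g1 : (zs.set j (c • v)).getD j 0 = c • v := by
            simp [List.getD, List.getElem?_set_self', hjz]
          have g2 : (zs.set j v).getD j 0 = v := by
            simp [List.getD, List.getElem?_set_self', hjz]
          rw [g1, g2, RR_smul_arg]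
          exact hT.set' zs hzs j (hzs ▸ hjz) c _
        · have g1 : (zs.set i (c • v)).getD j 0 = zs.getD j 0 := by
            simp [List.getD, List.getElem?_set_ne (fun hh => hji hh.symm)]
          have g2 : (zs.set i v).getD j 0 = zs.getD j 0 := by
            simp [List.getD, List.getElem?_set_ne (fun hh => hji hh.symm)]
          rw [g1, g2, List.set_comm _ _ (fun hh => hji hh.symm),
            List.set_comm _ _ (fun hh => hji hh.symm)]
          exact hT.set' (zs.set j (RR h S x y (zs.getD j 0))) (by simp [hzs]) i him c v
      rw [Finset.sum_congr rfl this, ← Finset.mul_sum]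
      ring

theorem homogN_Rpow (ω : V →ₗ[ℝ] V →ₗ[ℝ] ℝ) (q : ℕ) :
    HomogN (2 * q + 2) (Rpow h S ω q) := by
  induction q with
  | zero => exact homogN_base ω
  | succ q ih =>
      rw [Rpow_succ, show 2 * (q + 1) + 2 = (2 * q + 2) + 2 by ring]
      exact homogN_RAct h S ih

omit [AddCommGroup V] [Module ℝ V] in
theorem length_pairList (X Y : V) (q : ℕ) : (pairList X Y q).length = 2 * q := by
  induction q with
  | zero => rfl
  | succ q ih => simp [pairList, ih]; ring

theorem factor_append {m : ℕ} {T : List V → ℝ} (hT : HomogN m T)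
    (pre post : List V) (c : ℝ) (w : V) (hm : pre.length + (post.length + 1) = m) :
    T (pre ++ (c • w) :: post) = c * T (pre ++ w :: post) := by
  have e1 : pre ++ (c • w) :: post = (pre ++ w :: post).set pre.length (c • w) := by
    simp [List.set_append]
  have e2 : pre ++ w :: post = (pre ++ w :: post).set pre.length w := by
    simp [List.set_append]
  rw [e1, hT (pre ++ w :: post) pre.length c w (by simp; omega) (by omega), ← e2]

theorem key_sum (ε : ℝ) (X Y : V)
    (hXX : RR h S X Y X = (0 : ℝ) • X) (hXY : RR h S X Y Y = ε • Y) :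
    ∀ (q m : ℕ) (T : List V → ℝ), HomogN m T → ∀ rest : List V,
      2 * q + rest.length = m →
      ∑ i ∈ Finset.range (pairList X Y q ++ rest).length,
          T ((pairList X Y q ++ rest).set i (RR h S X Y ((pairList X Y q ++ rest).getD i 0)))
        = (q : ℝ) * ε * T (pairList X Y q ++ rest)
          + ∑ i ∈ Finset.range rest.length,
              T (pairList X Y q ++ rest.set i (RR h S X Y (rest.getD i 0))) := by
  intro q
  induction q with
  | zero =>
      intro m T hT rest hm
      simp [pairList]
  | succ q ih =>
      intro m T hT rest hm
      set zs := pairList X Y q ++ rest with hzsdef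
      have hzslen : zs.length = 2 * q + rest.length := by
        simp [hzsdef, length_pairList]
      have hlist : pairList X Y (q + 1) ++ rest = X :: Y :: zs := by
        simp [pairList, hzsdef]
      rw [hlist]
      have hm' : m = (2 * q + rest.length) + 2 := by omega
      -- split off the first two summands
      have hlen : (X :: Y :: zs).length = zs.length + 1 + 1 := by simp
      rw [hlen, Finset.sum_range_succ', Finset.sum_range_succ']
      have f0 : T ((X :: Y :: zs).set 0 (RR h S X Y ((X :: Y :: zs).getD 0 0))) = 0 := by
        have : (X :: Y :: zs).getD 0 0 = X := rfl
        rw [this, hXX]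
        have := hT (X :: Y :: zs) 0 0 X (by simp [hzslen]; omega) (by omega)
        simp only [List.set] at this ⊢
        rw [this]; ring
      have f1 : T ((X :: Y :: zs).set (0 + 1) (RR h S X Y ((X :: Y :: zs).getD (0 + 1) 0)))
          = ε * T (X :: Y :: zs) := by
        have : (X :: Y :: zs).getD (0 + 1) 0 = Y := rfl
        rw [this, hXY]
        have h2 : (X :: Y :: zs).set 1 Y = X :: Y :: zs := rfl
        have := hT (X :: Y :: zs) 1 ε Y (by simp [hzslen]; omega) (by omega)
        rw [this, h2]
      rw [f0, f1]
      -- the shifted sum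
      set T' : List V → ℝ := fun l => T (X :: Y :: l) with hT'def
      have hT' : HomogN (2 * q + rest.length) T' := by
        intro l i c v hl hi
        have := hT (X :: Y :: l) (i + 2) c v (by simp [hl]; omega) (by omega)
        simpa only [List.set, hT'def] using this
      have hshift : ∀ i, (X :: Y :: zs).set (i + 1 + 1) (RR h S X Y ((X :: Y :: zs).getD (i + 1 + 1) 0))
          = X :: Y :: zs.set i (RR h S X Y (zs.getD i 0)) := by
        intro i; rfl
      have hsum : ∑ i ∈ Finset.range zs.length,
            T ((X :: Y :: zs).set (i + 1 + 1) (RR h S X Y ((X :: Y :: zs).getD (i + 1 + 1) 0)))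
          = ∑ i ∈ Finset.range zs.length,
            T' (zs.set i (RR h S X Y (zs.getD i 0))) := by
        apply Finset.sum_congr rfl
        intro i hi
        rw [hshift i]
      rw [hsum]
      have hih := ih (2 * q + rest.length) T' hT' rest rfl
      rw [← hzsdef] at hih
      rw [hih]
      have hTz : T' zs = T (X :: Y :: zs) := rfl
      have hrw : ∀ l : List V, T' (pairList X Y q ++ l) = T (pairList X Y (q + 1) ++ l) := by
        intro l; simp [hT'def, pairList]
      have hsum2 : ∑ i ∈ Finset.range rest.length,
            T' (pairList X Y q ++ rest.set i (RR h S X Y (rest.getD i 0)))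
          = ∑ i ∈ Finset.range rest.length,
            T (pairList X Y (q + 1) ++ rest.set i (RR h S X Y (rest.getD i 0))) := by
        apply Finset.sum_congr rfl; intro i _; rw [hrw]
      rw [hsum2, hTz]
      push_cast
      ring

end Aux

theorem stmt14
    {V : Type*} [AddCommGroup V] [Module ℝ V]
    (n : ℕ) (hn : 2 ≤ n) (e : ℕ → V)
    (hbasis : ∃ b : Module.Basis (Fin (2 * n)) ℝ V, ∀ i : Fin (2 * n), b i = e (i.1 + 1))
    (h ω : V →ₗ[ℝ] V →ₗ[ℝ] ℝ)
    (hsymm : ∀ X Y, h X Y = h Y X)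
    (halt : ∀ X, ω X X = 0)
    (S : V →ₗ[ℝ] V)
    (α ε : ℝ) (hε : ε = 1 ∨ ε = -1)
    (hS1 : S (e 1) = α • e 1 + e 2)
    (hS2 : S (e 2) = α • e 2 + e 3)
    (hS3 : S (e 3) = α • e 3)
    (hh13 : h (e 1) (e 3) = ε) (hh31 : h (e 3) (e 1) = ε) (hh22 : h (e 2) (e 2) = ε)
    (hh0 : ∀ i j, 1 ≤ i → i ≤ 2 * n → 1 ≤ j → j ≤ 2 * n → min i j ≤ 3 →
      ¬((i = 1 ∧ j = 3) ∨ (i = 3 ∧ j = 1) ∨ (i = 2 ∧ j = 2)) → h (e i) (e j) = 0)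
    (hα : α = 0)
    (p : ℕ) (hp : 1 ≤ p) :
    Rpow h S ω p (pairList (e 1) (e 2) (p - 1) ++ [e 2, e 3, e 1, e 2]) =
      (-1) ^ (p + 1) * ε ^ p * (Nat.factorial (p - 1) : ℝ) * ω (e 2) (e 3) := by
  have h11 : h (e 1) (e 1) = 0 := hh0 1 1 (by omega) (by omega) (by omega) (by omega) (by omega) (by omega)
  have h12 : h (e 1) (e 2) = 0 := hh0 1 2 (by omega) (by omega) (by omega) (by omega) (by omega) (by omega)
  have h21 : h (e 2) (e 1) = 0 := hh0 2 1 (by omega) (by omega) (by omega) (by omega) (by omega) (by omega)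
  have h23 : h (e 2) (e 3) = 0 := hh0 2 3 (by omega) (by omega) (by omega) (by omega) (by omega) (by omega)
  have h32 : h (e 3) (e 2) = 0 := hh0 3 2 (by omega) (by omega) (by omega) (by omega) (by omega) (by omega)
  have hS1' : S (e 1) = e 2 := by rw [hS1, hα, zero_smul, zero_add]
  have hS2' : S (e 2) = e 3 := by rw [hS2, hα, zero_smul, zero_add]
  have hS3' : S (e 3) = 0 := by rw [hS3, hα, zero_smul]
  have hR11 : RR h S (e 1) (e 2) (e 1) = (0 : ℝ) • e 1 := by
    simp [RR, h21, h11]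
  have hR12 : RR h S (e 1) (e 2) (e 2) = ε • e 2 := by
    simp [RR, hh22, h12, hS1']
  have hR13 : RR h S (e 1) (e 2) (e 3) = (-ε) • e 3 := by
    simp [RR, h23, hh13, hS2', neg_smul]
  have hR231 : RR h S (e 2) (e 3) (e 1) = ε • e 3 := by
    simp [RR, hh31, h21, hS2']
  have hR232 : RR h S (e 2) (e 3) (e 2) = (0 : ℝ) • e 2 := by
    simp [RR, h32, hh22, hS3']
  have hω32 : ω (e 3) (e 2) = -ω (e 2) (e 3) := by
    have h0 := halt (e 2 + e 3)
    simp only [map_add, LinearMap.add_apply, halt] at h0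
    linarith
  have main : ∀ q : ℕ, Rpow h S ω (q + 1) (pairList (e 1) (e 2) q ++ [e 2, e 3, e 1, e 2])
      = (-1 : ℝ) ^ q * ε ^ (q + 1) * (Nat.factorial q : ℝ) * ω (e 2) (e 3) := by
    intro q
    induction q with
    | zero =>
        rw [show pairList (e 1) (e 2) 0 ++ [e 2, e 3, e 1, e 2]
            = e 2 :: e 3 :: [e 1, e 2] from rfl]
        rw [Rpow_succ, RAct_cons]
        rw [show ([e 1, e 2] : List V).length = 2 from rfl]
        rw [Finset.sum_range_succ, Finset.sum_range_succ, Finset.sum_range_zero]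
        rw [show ([e 1, e 2] : List V).getD 0 0 = e 1 from rfl]
        rw [show ([e 1, e 2] : List V).getD 1 0 = e 2 from rfl]
        rw [hR231, hR232]
        rw [show ([e 1, e 2] : List V).set 0 (ε • e 3) = [ε • e 3, e 2] from rfl]
        rw [show ([e 1, e 2] : List V).set 1 ((0:ℝ) • e 2) = [e 1, (0:ℝ) • e 2] from rfl]
        have A1 : Rpow h S ω 0 [ε • e 3, e 2] = ε * ω (e 3) (e 2) := by
          simp [Rpow, List.getD, map_smul]
        have A2 : Rpow h S ω 0 [e 1, (0:ℝ) • e 2] = 0 := by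
          simp [Rpow, List.getD, map_smul]
        rw [A1, A2, hω32]
        simp [Nat.factorial]
    | succ q ihq =>
        have hA := homogN_Rpow h S ω (q + 1)
        rw [show pairList (e 1) (e 2) (q + 1) ++ [e 2, e 3, e 1, e 2]
            = e 1 :: e 2 :: (pairList (e 1) (e 2) q ++ [e 2, e 3, e 1, e 2]) from by
          simp [pairList]]
        rw [Rpow_succ, RAct_cons]
        have hkey := key_sum h S ε (e 1) (e 2) hR11 hR12 q (2 * (q + 1) + 2)
          (Rpow h S ω (q + 1)) hA [e 2, e 3, e 1, e 2] (by simp; ring)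
        rw [hkey]
        rw [show ([e 2, e 3, e 1, e 2] : List V).length = 4 from rfl]
        rw [Finset.sum_range_succ, Finset.sum_range_succ, Finset.sum_range_succ,
          Finset.sum_range_succ, Finset.sum_range_zero]
        rw [show ([e 2, e 3, e 1, e 2] : List V).getD 0 0 = e 2 from rfl]
        rw [show ([e 2, e 3, e 1, e 2] : List V).getD 1 0 = e 3 from rfl]
        rw [show ([e 2, e 3, e 1, e 2] : List V).getD 2 0 = e 1 from rfl]
        rw [show ([e 2, e 3, e 1, e 2] : List V).getD 3 0 = e 2 from rfl]
        rw [hR12, hR13, hR11]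
        rw [show ([e 2, e 3, e 1, e 2] : List V).set 0 (ε • e 2)
            = [ε • e 2, e 3, e 1, e 2] from rfl]
        rw [show ([e 2, e 3, e 1, e 2] : List V).set 1 ((-ε) • e 3)
            = [e 2, (-ε) • e 3, e 1, e 2] from rfl]
        rw [show ([e 2, e 3, e 1, e 2] : List V).set 2 ((0:ℝ) • e 1)
            = [e 2, e 3, (0:ℝ) • e 1, e 2] from rfl]
        rw [show ([e 2, e 3, e 1, e 2] : List V).set 3 (ε • e 2)
            = [e 2, e 3, e 1, ε • e 2] from rfl]
        have t1 : Rpow h S ω (q + 1) (pairList (e 1) (e 2) q ++ [ε • e 2, e 3, e 1, e 2])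
            = ε * Rpow h S ω (q + 1) (pairList (e 1) (e 2) q ++ [e 2, e 3, e 1, e 2]) :=
          factor_append hA (pairList (e 1) (e 2) q) [e 3, e 1, e 2] ε (e 2)
            (by simp [length_pairList]; ring)
        have t2 : Rpow h S ω (q + 1) (pairList (e 1) (e 2) q ++ [e 2, (-ε) • e 3, e 1, e 2])
            = (-ε) * Rpow h S ω (q + 1) (pairList (e 1) (e 2) q ++ [e 2, e 3, e 1, e 2]) := by
          have := factor_append hA (pairList (e 1) (e 2) q ++ [e 2]) [e 1, e 2] (-ε) (e 3)
            (by simp [length_pairList]; ring)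
          simpa [List.append_assoc] using this
        have t3 : Rpow h S ω (q + 1) (pairList (e 1) (e 2) q ++ [e 2, e 3, (0:ℝ) • e 1, e 2])
            = 0 := by
          have := factor_append hA (pairList (e 1) (e 2) q ++ [e 2, e 3]) [e 2] (0:ℝ) (e 1)
            (by simp [length_pairList]; ring)
          simp only [List.append_assoc] at this
          simpa using this
        have t4 : Rpow h S ω (q + 1) (pairList (e 1) (e 2) q ++ [e 2, e 3, e 1, ε • e 2])
            = ε * Rpow h S ω (q + 1) (pairList (e 1) (e 2) q ++ [e 2, e 3, e 1, e 2]) := by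
          have := factor_append hA (pairList (e 1) (e 2) q ++ [e 2, e 3, e 1]) [] ε (e 2)
            (by simp [length_pairList]; ring)
          simpa [List.append_assoc] using this
        rw [t1, t2, t3, t4, ihq]
        rw [Nat.factorial_succ]
        push_cast
        ring
  obtain ⟨q, rfl⟩ : ∃ q, p = q + 1 := ⟨p - 1, by omega⟩
  rw [Nat.add_sub_cancel, main q, pow_succ, pow_succ]
  ring
end
end

section
/- Assume α = β = 0. For every p ≥ 1: (1) (R^{2p}·ω)(e_1, e_3, …, e_1, e_3, e_1, e_2, e_1, e_2), with 2p−1 leading pairs (e_1, e_3) followed by e_1, e_2, e_1, e_2, equals (−1)^p (εη)^{p−1} 2^{2p−2} ω(e_2, e_4); (2) (R^{2p}·ω)(e_1, e_3, …, e_1, e_3, e_1, e_4, e_1, e_4), with 2p−1 leading pairs (e_1, e_3) followed by e_1, e_4, e_1, e_4, equals (−1)^{p+1} (εη)^p 2^{2p−2} ω(e_2, e_4). -/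
noncomputable section

namespace Stmt16Aux

variable {V : Type*} [AddCommGroup V] [Module ℝ V]
variable (h : V →ₗ[ℝ] V →ₗ[ℝ] ℝ) (S : V →ₗ[ℝ] V) (ω : V →ₗ[ℝ] V →ₗ[ℝ] ℝ)

lemma RR_smul_left (c : ℝ) (X Y Z : V) : RR h S (c • X) Y Z = c • RR h S X Y Z := by
  simp [RR, map_smul, smul_sub, smul_smul, mul_comm]

lemma RR_smul_mid (c : ℝ) (X Y Z : V) : RR h S X (c • Y) Z = c • RR h S X Y Z := by
  simp [RR, map_smul, smul_sub, smul_smul, mul_comm]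

lemma RR_smul_right (c : ℝ) (X Y Z : V) : RR h S X Y (c • Z) = c • RR h S X Y Z := by
  simp [RR, map_smul, smul_sub, smul_smul, mul_comm]

lemma Rpow_zero_apply (l : List V) : Rpow h S ω 0 l = ω (l.getD 0 0) (l.getD 1 0) := rfl

lemma Rpow_succ_apply (q : ℕ) (l : List V) :
    Rpow h S ω (q + 1) l = RAct h S (Rpow h S ω q) l := by
  unfold Rpow
  rw [Function.iterate_succ_apply']

lemma RAct_cons (T : List V → ℝ) (X Y : V) (Zs : List V) :
    RAct h S T (X :: Y :: Zs) =
      -∑ i ∈ Finset.range Zs.length, T (Zs.set i (RR h S X Y (Zs.getD i 0))) := rfl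

lemma Rpow_set_smul : ∀ (q : ℕ) (l : List V), l.length = 2 * q + 2 →
    ∀ i, i < l.length → ∀ (c : ℝ) (v : V),
    Rpow h S ω q (l.set i (c • v)) = c * Rpow h S ω q (l.set i v) := by
  intro q
  induction q with
  | zero =>
    intro l hl i hi c v
    match l with
    | [] => simp at hl
    | [a] => simp only [List.length_cons, List.length_nil] at hl; omega
    | a :: b :: t =>
      have ht : t = [] := by
        simp only [List.length_cons] at hl
        exact List.eq_nil_of_length_eq_zero (by omega)
      subst ht
      have hi2 : i < 2 := by simpa using hi
      match i with
      | 0 => simp [Rpow_zero_apply, List.set]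
      | 1 => simp [Rpow_zero_apply, List.set]
      | (j + 2) => omega
  | succ q IH =>
    intro l hl i hi c v
    match l with
    | [] => simp at hl
    | [a] => simp only [List.length_cons, List.length_nil] at hl; omega
    | X :: Y :: Zs =>
      have hZs : Zs.length = 2 * q + 2 := by
        simp only [List.length_cons] at hl; omega
      match i with
      | 0 =>
        rw [show (X :: Y :: Zs).set 0 (c • v) = (c • v) :: Y :: Zs from rfl,
            show (X :: Y :: Zs).set 0 v = v :: Y :: Zs from rfl,
            Rpow_succ_apply, Rpow_succ_apply, RAct_cons, RAct_cons]
        have hsum : ∑ j ∈ Finset.range Zs.length,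
            Rpow h S ω q (Zs.set j (RR h S (c • v) Y (Zs.getD j 0)))
            = ∑ j ∈ Finset.range Zs.length,
              c * Rpow h S ω q (Zs.set j (RR h S v Y (Zs.getD j 0))) := by
          refine Finset.sum_congr rfl fun j hj => ?_
          rw [RR_smul_left]
          exact IH Zs hZs j (Finset.mem_range.mp hj) c _
        rw [hsum, ← Finset.mul_sum]
        ring
      | 1 =>
        rw [show (X :: Y :: Zs).set 1 (c • v) = X :: (c • v) :: Zs from rfl,
            show (X :: Y :: Zs).set 1 v = X :: v :: Zs from rfl,
            Rpow_succ_apply, Rpow_succ_apply, RAct_cons, RAct_cons]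
        have hsum : ∑ j ∈ Finset.range Zs.length,
            Rpow h S ω q (Zs.set j (RR h S X (c • v) (Zs.getD j 0)))
            = ∑ j ∈ Finset.range Zs.length,
              c * Rpow h S ω q (Zs.set j (RR h S X v (Zs.getD j 0))) := by
          refine Finset.sum_congr rfl fun j hj => ?_
          rw [RR_smul_mid]
          exact IH Zs hZs j (Finset.mem_range.mp hj) c _
        rw [hsum, ← Finset.mul_sum]
        ring
      | (j + 2) =>
        have hj : j < Zs.length := by
          simp only [List.length_cons] at hi; omega
        rw [show (X :: Y :: Zs).set (j + 2) (c • v) = X :: Y :: Zs.set j (c • v) from rfl,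
            show (X :: Y :: Zs).set (j + 2) v = X :: Y :: Zs.set j v from rfl,
            Rpow_succ_apply, Rpow_succ_apply, RAct_cons, RAct_cons,
            List.length_set, List.length_set]
        have hgdj : ∀ w : V, (Zs.set j w).getD j 0 = w := by
          intro w
          have hlt : j < (Zs.set j w).length := by rw [List.length_set]; exact hj
          rw [List.getD_eq_getElem _ _ hlt]
          exact List.getElem_set_self hlt
        have hgdk : ∀ (w : V) (k : ℕ), k < Zs.length → k ≠ j →
            (Zs.set j w).getD k 0 = Zs.getD k 0 := by
          intro w k hk hkj
          have hlt : k < (Zs.set j w).length := by rw [List.length_set]; exact hk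
          rw [List.getD_eq_getElem _ _ hlt, List.getD_eq_getElem _ _ hk]
          exact List.getElem_set_ne (fun hh => hkj hh.symm) hlt
        have hsum : ∑ k ∈ Finset.range Zs.length,
            Rpow h S ω q ((Zs.set j (c • v)).set k (RR h S X Y ((Zs.set j (c • v)).getD k 0)))
            = ∑ k ∈ Finset.range Zs.length,
              c * Rpow h S ω q ((Zs.set j v).set k (RR h S X Y ((Zs.set j v).getD k 0))) := by
          refine Finset.sum_congr rfl fun k hk => ?_
          have hk' : k < Zs.length := Finset.mem_range.mp hk
          by_cases hkj : k = j
          · subst hkj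
            rw [hgdj, hgdj, List.set_set, List.set_set, RR_smul_right]
            exact IH Zs hZs k hk' c _
          · rw [hgdk _ k hk' hkj, hgdk _ k hk' hkj,
                List.set_comm _ _ (fun hh => hkj hh.symm),
                List.set_comm _ _ (fun hh => hkj hh.symm)]
            exact IH (Zs.set k (RR h S X Y (Zs.getD k 0)))
              (by rw [List.length_set]; exact hZs) j
              (by rw [List.length_set]; exact hj) c v
        rw [hsum, ← Finset.mul_sum]
        ring

lemma Rpow_set_zero (q : ℕ) (l : List V) (hl : l.length = 2 * q + 2)
    (i : ℕ) (hi : i < l.length) : Rpow h S ω q (l.set i (0 : V)) = 0 := by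
  have := Rpow_set_smul h S ω q l hl i hi 0 0
  simpa using this

lemma length_pairList (X Y : V) : ∀ q, (pairList X Y q).length = 2 * q
  | 0 => rfl
  | q + 1 => by
      simp only [pairList, List.length_cons, length_pairList X Y q]; omega

lemma getD_pairList (X Y : V) : ∀ (q i : ℕ), i < 2 * q →
    (pairList X Y q).getD i 0 = X ∨ (pairList X Y q).getD i 0 = Y := by
  intro q
  induction q with
  | zero => intro i hi; omega
  | succ q IH =>
    intro i hi
    match i with
    | 0 => left; rfl
    | 1 => right; rfl
    | (j + 2) =>
      have := IH j (by omega)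
      simpa [pairList, List.getD_cons_succ] using this

lemma getD_append_add (L t : List V) (j : ℕ) :
    (L ++ t).getD (L.length + j) 0 = t.getD j 0 := by
  rw [List.getD_append_right _ _ _ _ (by omega)]
  congr 1
  omega

lemma set_append_add (L t : List V) (j : ℕ) (v : V) :
    (L ++ t).set (L.length + j) v = L ++ t.set j v := by
  induction L with
  | nil => simp
  | cons x L IH =>
    rw [List.cons_append, List.length_cons,
        show L.length + 1 + j = (L.length + j) + 1 by omega,
        List.set_cons_succ, IH, List.cons_append]

lemma Rpow_step (u w : V) (huu : RR h S u w u = 0) (hww : RR h S u w w = 0)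
    (q : ℕ) (x y : V) :
    Rpow h S ω (q + 2) (pairList u w (q + 1) ++ [u, x, u, y]) =
      -(Rpow h S ω (q + 1) (pairList u w q ++ [u, RR h S u w x, u, y]) +
        Rpow h S ω (q + 1) (pairList u w q ++ [u, x, u, RR h S u w y])) := by
  set Zs := pairList u w q ++ [u, x, u, y] with hZ
  have hL : (pairList u w q).length = 2 * q := length_pairList u w q
  have hlen : Zs.length = 2 * q + 4 := by
    rw [hZ, List.length_append, hL]; rfl
  have hlen' : Zs.length = 2 * (q + 1) + 2 := by omega
  have h1 : pairList u w (q + 1) ++ [u, x, u, y] = u :: w :: Zs := by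
    rw [hZ]; rfl
  rw [h1, show q + 2 = (q + 1) + 1 from rfl, Rpow_succ_apply, RAct_cons, hlen]
  have expand : ∀ f : ℕ → ℝ, ∑ i ∈ Finset.range (2 * q + 4), f i =
      (∑ i ∈ Finset.range (2 * q), f i) + f (2 * q) + f (2 * q + 1)
        + f (2 * q + 2) + f (2 * q + 3) := by
    intro f
    rw [show 2 * q + 4 = (2 * q + 3) + 1 from rfl, Finset.sum_range_succ,
        show 2 * q + 3 = (2 * q + 2) + 1 from rfl, Finset.sum_range_succ,
        show 2 * q + 2 = (2 * q + 1) + 1 from rfl, Finset.sum_range_succ,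
        Finset.sum_range_succ]
  rw [expand]
  have hz : ∑ i ∈ Finset.range (2 * q),
      Rpow h S ω (q + 1) (Zs.set i (RR h S u w (Zs.getD i 0))) = 0 := by
    refine Finset.sum_eq_zero fun i hi => ?_
    have hi' : i < 2 * q := Finset.mem_range.mp hi
    have hilt : i < (pairList u w q).length := by omega
    rw [hZ, List.getD_append _ _ _ _ hilt]
    rcases getD_pairList u w q i hi' with hgd | hgd <;> rw [hgd]
    · rw [huu]
      exact Rpow_set_zero h S ω (q + 1) _ hlen' i (by omega)
    · rw [hww]
      exact Rpow_set_zero h S ω (q + 1) _ hlen' i (by omega)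
  have g0 : Zs.getD (2 * q) 0 = u := by
    rw [hZ, show 2 * q = (pairList u w q).length + 0 by omega, getD_append_add]; rfl
  have g1 : Zs.getD (2 * q + 1) 0 = x := by
    rw [hZ, show 2 * q + 1 = (pairList u w q).length + 1 by omega, getD_append_add]; rfl
  have g2 : Zs.getD (2 * q + 2) 0 = u := by
    rw [hZ, show 2 * q + 2 = (pairList u w q).length + 2 by omega, getD_append_add]; rfl
  have g3 : Zs.getD (2 * q + 3) 0 = y := by
    rw [hZ, show 2 * q + 3 = (pairList u w q).length + 3 by omega, getD_append_add]; rfl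
  have s1 : Zs.set (2 * q + 1) (RR h S u w x) = pairList u w q ++ [u, RR h S u w x, u, y] := by
    rw [hZ, show 2 * q + 1 = (pairList u w q).length + 1 by omega, set_append_add]; rfl
  have s3 : Zs.set (2 * q + 3) (RR h S u w y) = pairList u w q ++ [u, x, u, RR h S u w y] := by
    rw [hZ, show 2 * q + 3 = (pairList u w q).length + 3 by omega, set_append_add]; rfl
  have t0 : Rpow h S ω (q + 1) (Zs.set (2 * q) (RR h S u w (Zs.getD (2 * q) 0))) = 0 := by
    rw [g0, huu]
    exact Rpow_set_zero h S ω (q + 1) _ hlen' _ (by omega)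
  have t2 : Rpow h S ω (q + 1) (Zs.set (2 * q + 2) (RR h S u w (Zs.getD (2 * q + 2) 0))) = 0 := by
    rw [g2, huu]
    exact Rpow_set_zero h S ω (q + 1) _ hlen' _ (by omega)
  rw [hz, t0, t2, g1, g3, s1, s3]
  ring

lemma Pstep (u w : V) (huu : RR h S u w u = 0) (hww : RR h S u w w = 0)
    (q : ℕ) (x y x' y' : V) (cx cy : ℝ)
    (hx : RR h S u w x = cx • x') (hy : RR h S u w y = cy • y') :
    Rpow h S ω (q + 2) (pairList u w (q + 1) ++ [u, x, u, y]) =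
      -(cx * Rpow h S ω (q + 1) (pairList u w q ++ [u, x', u, y]) +
        cy * Rpow h S ω (q + 1) (pairList u w q ++ [u, x, u, y'])) := by
  rw [Rpow_step h S ω u w huu hww q x y, hx, hy]
  have hL : (pairList u w q).length = 2 * q := length_pairList u w q
  have hlen1 : (pairList u w q ++ [u, x', u, y] : List V).length = 2 * (q + 1) + 2 := by
    rw [List.length_append, hL]; rfl
  have hlen2 : (pairList u w q ++ [u, x, u, y'] : List V).length = 2 * (q + 1) + 2 := by
    rw [List.length_append, hL]; rfl
  have e1 : pairList u w q ++ [u, cx • x', u, y] =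
      (pairList u w q ++ [u, x', u, y]).set ((pairList u w q).length + 1) (cx • x') := by
    rw [set_append_add]; rfl
  have e1' : (pairList u w q ++ [u, x', u, y]).set ((pairList u w q).length + 1) x' =
      pairList u w q ++ [u, x', u, y] := by
    rw [set_append_add]; rfl
  have e2 : pairList u w q ++ [u, x, u, cy • y'] =
      (pairList u w q ++ [u, x, u, y']).set ((pairList u w q).length + 3) (cy • y') := by
    rw [set_append_add]; rfl
  have e2' : (pairList u w q ++ [u, x, u, y']).set ((pairList u w q).length + 3) y' =
      pairList u w q ++ [u, x, u, y'] := by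
    rw [set_append_add]; rfl
  rw [e1, Rpow_set_smul h S ω (q + 1) _ hlen1 _ (by rw [hlen1]; omega) cx x', e1',
      e2, Rpow_set_smul h S ω (q + 1) _ hlen2 _ (by rw [hlen2]; omega) cy y', e2']

lemma Rpow_one (a b c d : V) :
    Rpow h S ω 1 [a, b, c, d] = -(ω (RR h S a b c) d + ω c (RR h S a b d)) := by
  rw [show (1 : ℕ) = 0 + 1 from rfl, Rpow_succ_apply, RAct_cons]
  simp [Finset.sum_range_succ, Rpow_zero_apply, List.set]

end Stmt16Aux

open Stmt16Aux
theorem stmt16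
    {V : Type*} [AddCommGroup V] [Module ℝ V]
    (n : ℕ) (hn : 2 ≤ n) (e : ℕ → V)
    (hbasis : ∃ b : Module.Basis (Fin (2 * n)) ℝ V, ∀ i : Fin (2 * n), b i = e (i.1 + 1))
    (h ω : V →ₗ[ℝ] V →ₗ[ℝ] ℝ)
    (hsymm : ∀ X Y, h X Y = h Y X)
    (halt : ∀ X, ω X X = 0)
    (S : V →ₗ[ℝ] V)
    (α β ε η : ℝ) (hε : ε = 1 ∨ ε = -1) (hη : η = 1 ∨ η = -1)
    (hS1 : S (e 1) = α • e 1 + e 2)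
    (hS2 : S (e 2) = α • e 2)
    (hS3 : S (e 3) = β • e 3 + e 4)
    (hS4 : S (e 4) = β • e 4)
    (hh12 : h (e 1) (e 2) = ε) (hh21 : h (e 2) (e 1) = ε)
    (hh34 : h (e 3) (e 4) = η) (hh43 : h (e 4) (e 3) = η)
    (hh0 : ∀ i j, 1 ≤ i → i ≤ 2 * n → 1 ≤ j → j ≤ 2 * n → min i j ≤ 4 →
      ¬((i = 1 ∧ j = 2) ∨ (i = 2 ∧ j = 1) ∨ (i = 3 ∧ j = 4) ∨ (i = 4 ∧ j = 3)) →
      h (e i) (e j) = 0)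
    (hα : α = 0) (hβ0 : β = 0)
    (p : ℕ) (hp : 1 ≤ p) :
    Rpow h S ω (2 * p) (pairList (e 1) (e 3) (2 * p - 1) ++ [e 1, e 2, e 1, e 2]) =
      (-1) ^ p * (ε * η) ^ (p - 1) * 2 ^ (2 * p - 2) * ω (e 2) (e 4) ∧
    Rpow h S ω (2 * p) (pairList (e 1) (e 3) (2 * p - 1) ++ [e 1, e 4, e 1, e 4]) =
      (-1) ^ (p + 1) * (ε * η) ^ p * 2 ^ (2 * p - 2) * ω (e 2) (e 4) := by
  have h11 : h (e 1) (e 1) = 0 := hh0 1 1 (by omega) (by omega) (by omega) (by omega) (by omega) (by simp)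
  have h13 : h (e 1) (e 3) = 0 := hh0 1 3 (by omega) (by omega) (by omega) (by omega) (by omega) (by simp)
  have h31 : h (e 3) (e 1) = 0 := hh0 3 1 (by omega) (by omega) (by omega) (by omega) (by omega) (by simp)
  have h33 : h (e 3) (e 3) = 0 := hh0 3 3 (by omega) (by omega) (by omega) (by omega) (by omega) (by simp)
  have h32 : h (e 3) (e 2) = 0 := hh0 3 2 (by omega) (by omega) (by omega) (by omega) (by omega) (by simp)
  have h14 : h (e 1) (e 4) = 0 := hh0 1 4 (by omega) (by omega) (by omega) (by omega) (by omega) (by simp)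
  have h22 : h (e 2) (e 2) = 0 := hh0 2 2 (by omega) (by omega) (by omega) (by omega) (by omega) (by simp)
  have h24 : h (e 2) (e 4) = 0 := hh0 2 4 (by omega) (by omega) (by omega) (by omega) (by omega) (by simp)
  have h41 : h (e 4) (e 1) = 0 := hh0 4 1 (by omega) (by omega) (by omega) (by omega) (by omega) (by simp)
  have h42 : h (e 4) (e 2) = 0 := hh0 4 2 (by omega) (by omega) (by omega) (by omega) (by omega) (by simp)
  have h44 : h (e 4) (e 4) = 0 := hh0 4 4 (by omega) (by omega) (by omega) (by omega) (by omega) (by simp)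
  have hRR1 : RR h S (e 1) (e 3) (e 1) = 0 := by simp [RR, h31, h11]
  have hRR3 : RR h S (e 1) (e 3) (e 3) = 0 := by simp [RR, h33, h13]
  have hRRe2 : RR h S (e 1) (e 3) (e 2) = (-ε) • e 4 := by
    simp [RR, h32, hh12, hS3, hβ0]
  have hRRe4 : RR h S (e 1) (e 3) (e 4) = η • e 2 := by
    simp [RR, hh34, h14, hS1, hα]
  have hR21 : RR h S (e 1) (e 2) (e 1) = ε • e 2 := by
    simp [RR, hh21, h11, hS1, hα]
  have hR22 : RR h S (e 1) (e 2) (e 2) = 0 := by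
    simp [RR, h22, hh12, hS2, hα]
  have hR24 : RR h S (e 1) (e 2) (e 4) = 0 := by
    simp [RR, h24, h14, hS2, hα]
  have hR41 : RR h S (e 1) (e 4) (e 1) = 0 := by
    simp [RR, h41, h11, hS4, hβ0]
  have hR42 : RR h S (e 1) (e 4) (e 2) = 0 := by
    simp [RR, h42, hh12, hS4, hβ0]
  have hR44 : RR h S (e 1) (e 4) (e 4) = 0 := by
    simp [RR, h44, h14, hS4, hβ0]
  have B22 : Rpow h S ω 1 [e 1, e 2, e 1, e 2] = 0 := by
    rw [Rpow_one, hR21, hR22]; simp [halt]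
  have B24 : Rpow h S ω 1 [e 1, e 2, e 1, e 4] = -ε * ω (e 2) (e 4) := by
    rw [Rpow_one, hR21, hR24]; simp
  have B42 : Rpow h S ω 1 [e 1, e 4, e 1, e 2] = 0 := by
    rw [Rpow_one, hR41, hR42]; simp
  have B44 : Rpow h S ω 1 [e 1, e 4, e 1, e 4] = 0 := by
    rw [Rpow_one, hR41, hR44]; simp
  have main : ∀ k : ℕ,
      Rpow h S ω (2 * k + 2) (pairList (e 1) (e 3) (2 * k + 1) ++ [e 1, e 2, e 1, e 2]) =
        (-1) ^ (k + 1) * (ε * η) ^ k * 2 ^ (2 * k) * ω (e 2) (e 4) ∧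
      Rpow h S ω (2 * k + 2) (pairList (e 1) (e 3) (2 * k + 1) ++ [e 1, e 4, e 1, e 4]) =
        (-1) ^ k * (ε * η) ^ (k + 1) * 2 ^ (2 * k) * ω (e 2) (e 4) := by
    intro k
    induction k with
    | zero =>
      constructor
      · have t := Pstep h S ω (e 1) (e 3) hRR1 hRR3 0 (e 2) (e 2) (e 4) (e 4)
          (-ε) (-ε) hRRe2 hRRe2
        rw [show 2 * 0 + 2 = 0 + 2 from rfl, show 2 * 0 + 1 = 0 + 1 from rfl, t,
            show pairList (e 1) (e 3) 0 = ([] : List V) from rfl]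
        simp only [List.nil_append, show (0 : ℕ) + 1 = 1 from rfl]
        rw [B42, B24]
        rcases hε with rfl | rfl <;> ring
      · have t := Pstep h S ω (e 1) (e 3) hRR1 hRR3 0 (e 4) (e 4) (e 2) (e 2)
          η η hRRe4 hRRe4
        rw [show 2 * 0 + 2 = 0 + 2 from rfl, show 2 * 0 + 1 = 0 + 1 from rfl, t,
            show pairList (e 1) (e 3) 0 = ([] : List V) from rfl]
        simp only [List.nil_append, show (0 : ℕ) + 1 = 1 from rfl]
        rw [B24, B42]
        rcases hε with rfl | rfl <;> ring
    | succ k IH =>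
      obtain ⟨hA, hD⟩ := IH
      have hb : Rpow h S ω (2 * k + 2 + 1)
          (pairList (e 1) (e 3) (2 * k + 2) ++ [e 1, e 2, e 1, e 4]) =
          ε * ((-1) ^ k * (ε * η) ^ (k + 1) * 2 ^ (2 * k) * ω (e 2) (e 4))
            - η * ((-1) ^ (k + 1) * (ε * η) ^ k * 2 ^ (2 * k) * ω (e 2) (e 4)) := by
        have t := Pstep h S ω (e 1) (e 3) hRR1 hRR3 (2 * k + 1) (e 2) (e 4) (e 4) (e 2)
          (-ε) η hRRe2 hRRe4
        rw [show 2 * k + 1 + 2 = 2 * k + 2 + 1 by omega] at t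
        rw [t, show 2 * k + 1 + 1 = 2 * k + 2 by omega, hA, hD]
        ring
      have hb' : Rpow h S ω (2 * k + 2 + 1)
          (pairList (e 1) (e 3) (2 * k + 2) ++ [e 1, e 4, e 1, e 2]) =
          ε * ((-1) ^ k * (ε * η) ^ (k + 1) * 2 ^ (2 * k) * ω (e 2) (e 4))
            - η * ((-1) ^ (k + 1) * (ε * η) ^ k * 2 ^ (2 * k) * ω (e 2) (e 4)) := by
        have t := Pstep h S ω (e 1) (e 3) hRR1 hRR3 (2 * k + 1) (e 4) (e 2) (e 2) (e 4)
          η (-ε) hRRe4 hRRe2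
        rw [show 2 * k + 1 + 2 = 2 * k + 2 + 1 by omega] at t
        rw [t, show 2 * k + 1 + 1 = 2 * k + 2 by omega, hA, hD]
        ring
      constructor
      · have t := Pstep h S ω (e 1) (e 3) hRR1 hRR3 (2 * k + 2) (e 2) (e 2) (e 4) (e 4)
          (-ε) (-ε) hRRe2 hRRe2
        rw [show 2 * (k + 1) + 2 = 2 * k + 2 + 2 by omega,
            show 2 * (k + 1) + 1 = 2 * k + 2 + 1 by omega, t, hb, hb']
        rcases hε with rfl | rfl <;> rcases hη with rfl | rfl <;> ring
      · have t := Pstep h S ω (e 1) (e 3) hRR1 hRR3 (2 * k + 2) (e 4) (e 4) (e 2) (e 2)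
          η η hRRe4 hRRe4
        rw [show 2 * (k + 1) + 2 = 2 * k + 2 + 2 by omega,
            show 2 * (k + 1) + 1 = 2 * k + 2 + 1 by omega, t, hb, hb']
        rcases hε with rfl | rfl <;> rcases hη with rfl | rfl <;> ring
  obtain ⟨k, rfl⟩ : ∃ k, p = k + 1 := ⟨p - 1, by omega⟩
  have hm := main k
  rw [show 2 * (k + 1) = 2 * k + 2 by omega, show 2 * k + 2 - 1 = 2 * k + 1 by omega,
      show 2 * k + 2 - 2 = 2 * k by omega, show k + 1 - 1 = k by omega]
  constructor
  · rw [hm.1]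
  · rw [hm.2]
    ring

end
end

section
/- For every p ≥ 1 and every i with 3 ≤ i ≤ 2n: (1) (R^{2p}·ω)(e_1, e_2, …, e_1, e_2, e_1, e_i), with 2p leading pairs (e_1, e_2) followed by e_1, e_i, equals (α² + β²)^p ω(e_1, e_i); (2) (R^{2p}·ω)(e_1, e_2, …, e_1, e_2, e_2, e_i), with 2p leading pairs (e_1, e_2) followed by e_2, e_i, equals (α² + β²)^p ω(e_2, e_i). -/
noncomputable section

namespace Aux

variable {V : Type*} [AddCommGroup V] [Module ℝ V]
variable (h : V →ₗ[ℝ] V →ₗ[ℝ] ℝ) (S : V →ₗ[ℝ] V)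

def Comp : List V → V → V
  | [], Z => Z
  | u :: v :: rest, Z => RR h S u v (Comp rest Z)
  | _, _ => 0

lemma RR_zero (u v : V) : RR h S u v 0 = 0 := by simp [RR]

lemma RR_add (u v z₁ z₂ : V) : RR h S u v (z₁ + z₂) = RR h S u v z₁ + RR h S u v z₂ := by
  simp only [RR, map_add, add_smul]; abel

lemma RR_sub (u v z₁ z₂ : V) : RR h S u v (z₁ - z₂) = RR h S u v z₁ - RR h S u v z₂ := by
  simp only [RR, map_sub, sub_smul]; abel

lemma RR_smul (u v : V) (t : ℝ) (z : V) : RR h S u v (t • z) = t • RR h S u v z := by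
  simp only [RR, map_smul, smul_eq_mul, mul_smul, smul_sub]

lemma RR_sum {ι : Type*} (u v : V) (s : Finset ι) (f : ι → V) :
    RR h S u v (∑ j ∈ s, f j) = ∑ j ∈ s, RR h S u v (f j) := by
  classical
  induction s using Finset.induction with
  | empty => simp [RR_zero]
  | insert _ _ hx ih => simp [Finset.sum_insert hx, RR_add, ih]

lemma Rpow_succ (ω : V →ₗ[ℝ] V →ₗ[ℝ] ℝ) (q : ℕ) :
    Rpow h S ω (q + 1) = RAct h S (Rpow h S ω q) := by
  unfold Rpow; rw [Function.iterate_succ_apply']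

lemma RAct_cons (T : List V → ℝ) (X Y : V) (Zs : List V) :
    RAct h S T (X :: Y :: Zs) =
      -∑ i ∈ Finset.range Zs.length, T (Zs.set i (RR h S X Y (Zs.getD i 0))) := rfl

variable (U : Submodule ℝ V)

lemma comp_mem (hRRU : ∀ u v Z, u ∈ U → v ∈ U → RR h S u v Z ∈ U) :
    ∀ (us : List V), (∀ x ∈ us, x ∈ U) → ∀ Z : V, Z ∈ U → Comp h S us Z ∈ U
  | [], _, Z, hZ => hZ
  | [a], _, Z, _ => by simp [Comp]
  | a :: b :: rest, hmem, Z, hZ => by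
      have := comp_mem hRRU rest (fun x hx => hmem x (by simp [hx])) Z hZ
      exact hRRU _ _ _ (hmem a (by simp)) (hmem b (by simp))

lemma deriv_lemma
    (hcomm : ∀ u v X Y Z : V, u ∈ U → v ∈ U → X ∈ U → Y ∈ U → Z ∈ U →
      RR h S (RR h S u v X) Y Z + RR h S X (RR h S u v Y) Z =
        RR h S u v (RR h S X Y Z) - RR h S X Y (RR h S u v Z))
    (hRRU : ∀ u v Z, u ∈ U → v ∈ U → RR h S u v Z ∈ U) :
    ∀ (us : List V) (Z u v : V), (∀ x ∈ us, x ∈ U) → Z ∈ U → u ∈ U → v ∈ U →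
      (∑ j ∈ Finset.range us.length,
          Comp h S (us.set j (RR h S u v (us.getD j 0))) Z)
        + Comp h S us (RR h S u v Z) = RR h S u v (Comp h S us Z)
  | [], Z, u, v, _, hZ, hu, hv => by simp [Comp]
  | [a], Z, u, v, _, hZ, hu, hv => by simp [Comp, RR_zero]
  | a :: b :: rest, Z, u, v, hmem, hZ, hu, hv => by
      have ha : a ∈ U := hmem a (by simp)
      have hb : b ∈ U := hmem b (by simp)
      have hrest : ∀ x ∈ rest, x ∈ U := fun x hx => hmem x (by simp [hx])
      have hZc : Comp h S rest Z ∈ U := comp_mem h S U hRRU rest hrest Z hZ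
      have IH := deriv_lemma hcomm hRRU rest Z u v hrest hZ hu hv
      have hlen : (a :: b :: rest).length = rest.length + 1 + 1 := by simp
      rw [hlen, Finset.sum_range_succ', Finset.sum_range_succ']
      have e0 : Comp h S ((a :: b :: rest).set 0 (RR h S u v ((a :: b :: rest).getD 0 0))) Z
          = RR h S (RR h S u v a) b (Comp h S rest Z) := rfl
      have e1 : ∀ j : ℕ, ((a :: b :: rest).set (j+1+1) (RR h S u v ((a :: b :: rest).getD (j+1+1) 0)))
          = a :: b :: rest.set j (RR h S u v (rest.getD j 0)) := by intro j; rfl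
      have e2 : Comp h S ((a :: b :: rest).set (0+1) (RR h S u v ((a :: b :: rest).getD (0+1) 0))) Z
          = RR h S a (RR h S u v b) (Comp h S rest Z) := rfl
      rw [e0, e2]
      have e3 : ∀ j : ℕ, Comp h S (a :: b :: rest.set j (RR h S u v (rest.getD j 0))) Z
          = RR h S a b (Comp h S (rest.set j (RR h S u v (rest.getD j 0))) Z) := fun j => rfl
      simp only [e1, e3]
      rw [← RR_sum]
      have e4 : Comp h S (a :: b :: rest) (RR h S u v Z)
          = RR h S a b (Comp h S rest (RR h S u v Z)) := rfl
      have e5 : Comp h S (a :: b :: rest) Z = RR h S a b (Comp h S rest Z) := rfl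
      rw [e4, e5]
      have key : (∑ j ∈ Finset.range rest.length,
          Comp h S (rest.set j (RR h S u v (rest.getD j 0))) Z)
          = RR h S u v (Comp h S rest Z) - Comp h S rest (RR h S u v Z) := by
        rw [← IH]; abel
      rw [key, RR_sub]
      have := hcomm u v a b (Comp h S rest Z) hu hv ha hb hZc
      linear_combination (norm := abel) this

end Aux

namespace Aux

variable {V : Type*} [AddCommGroup V] [Module ℝ V]
variable (h : V →ₗ[ℝ] V →ₗ[ℝ] ℝ) (S : V →ₗ[ℝ] V) (ω : V →ₗ[ℝ] V →ₗ[ℝ] ℝ)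
variable (U : Submodule ℝ V)

lemma main_lemma
    (hcomm : ∀ u v X Y Z : V, u ∈ U → v ∈ U → X ∈ U → Y ∈ U → Z ∈ U →
      RR h S (RR h S u v X) Y Z + RR h S X (RR h S u v Y) Z =
        RR h S u v (RR h S X Y Z) - RR h S X Y (RR h S u v Z))
    (hRRU : ∀ u v Z, u ∈ U → v ∈ U → RR h S u v Z ∈ U) :
    ∀ (q : ℕ) (us : List V) (Z W : V), us.length = 2 * q →
      (∀ x ∈ us, x ∈ U) → Z ∈ U →
      (∀ u v, u ∈ U → v ∈ U → RR h S u v W = 0) →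
      Rpow h S ω q (us ++ [Z, W]) = (-1 : ℝ) ^ q * ω (Comp h S us Z) W := by
  intro q
  induction q with
  | zero =>
      intro us Z W hlen hmem hZ hW
      have : us = [] := List.length_eq_zero_iff.mp (by omega)
      subst this
      simp [Rpow, Comp]
  | succ q IH =>
      intro us Z W hlen hmem hZ hW
      match us, hlen with
      | a :: b :: rest, hlen =>
        have ha : a ∈ U := hmem a (by simp)
        have hb : b ∈ U := hmem b (by simp)
        have hrest : ∀ x ∈ rest, x ∈ U := fun x hx => hmem x (by simp [hx])
        have hrl : rest.length = 2 * q := by simp at hlen; omega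
        have hl2 : (rest ++ [Z, W]).length = rest.length + 1 + 1 := by simp
        rw [Rpow_succ]
        have : (a :: b :: rest) ++ [Z, W] = a :: b :: (rest ++ [Z, W]) := rfl
        rw [this, RAct_cons, hl2, Finset.sum_range_succ, Finset.sum_range_succ]
        -- the term at index rest.length + 1  (the W slot)
        have eW : (rest ++ [Z, W]).getD (rest.length + 1) 0 = W := by
          rw [List.getD_append_right _ _ _ _ (by omega)]
          simp
        have eWs : (rest ++ [Z, W]).set (rest.length + 1)
            (RR h S a b ((rest ++ [Z, W]).getD (rest.length + 1) 0))
            = rest ++ [Z, RR h S a b W] := by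
          rw [eW, List.set_append]
          simp
        have hWab : RR h S a b W = 0 := hW a b ha hb
        have tW : Rpow h S ω q ((rest ++ [Z, W]).set (rest.length + 1)
            (RR h S a b ((rest ++ [Z, W]).getD (rest.length + 1) 0))) = 0 := by
          rw [eWs, hWab, IH rest Z 0 hrl hrest hZ (fun u v _ _ => RR_zero h S u v)]
          simp
        -- the term at index rest.length (the Z slot)
        have eZ : (rest ++ [Z, W]).getD rest.length 0 = Z := by
          rw [List.getD_append_right _ _ _ _ (by omega)]
          simp
        have eZs : (rest ++ [Z, W]).set rest.length
            (RR h S a b ((rest ++ [Z, W]).getD rest.length 0))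
            = rest ++ [RR h S a b Z, W] := by
          rw [eZ, List.set_append]
          simp
        have tZ : Rpow h S ω q ((rest ++ [Z, W]).set rest.length
            (RR h S a b ((rest ++ [Z, W]).getD rest.length 0)))
            = (-1 : ℝ) ^ q * ω (Comp h S rest (RR h S a b Z)) W := by
          rw [eZs]
          exact IH rest (RR h S a b Z) W hrl hrest (hRRU a b Z ha hb) hW
        -- the terms at indices j < rest.length
        have tj : ∀ j ∈ Finset.range rest.length,
            Rpow h S ω q ((rest ++ [Z, W]).set j
              (RR h S a b ((rest ++ [Z, W]).getD j 0)))
            = (-1 : ℝ) ^ q * ω (Comp h S (rest.set j (RR h S a b (rest.getD j 0))) Z) W := by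
          intro j hj
          rw [Finset.mem_range] at hj
          rw [List.getD_append _ _ _ _ hj, List.set_append, if_pos hj]
          refine IH _ Z W (by simp [hrl]) ?_ hZ hW
          intro x hx
          rcases List.mem_or_eq_of_mem_set hx with hx' | rfl
          · exact hrest x hx'
          · exact hRRU a b _ ha hb
        rw [Finset.sum_congr rfl tj, tW, tZ]
        have sum_eq : (∑ j ∈ Finset.range rest.length,
            (-1 : ℝ) ^ q * ω (Comp h S (rest.set j (RR h S a b (rest.getD j 0))) Z) W)
            = (-1 : ℝ) ^ q * ω (∑ j ∈ Finset.range rest.length,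
                Comp h S (rest.set j (RR h S a b (rest.getD j 0))) Z) W := by
          rw [map_sum, LinearMap.sum_apply, Finset.mul_sum]
        rw [sum_eq]
        have key := deriv_lemma h S U hcomm hRRU rest Z a b hrest hZ ha hb
        have key2 : (∑ j ∈ Finset.range rest.length,
            Comp h S (rest.set j (RR h S a b (rest.getD j 0))) Z)
            = RR h S a b (Comp h S rest Z) - Comp h S rest (RR h S a b Z) := by
          rw [← key]; abel
        rw [key2]
        have e5 : Comp h S (a :: b :: rest) Z = RR h S a b (Comp h S rest Z) := rfl
        rw [e5, map_sub, LinearMap.sub_apply, pow_succ]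
        ring

end Aux

namespace Aux

lemma pairList_length {V : Type*} (X Y : V) : ∀ k, (pairList X Y k).length = 2 * k
  | 0 => rfl
  | k + 1 => by simp [pairList, pairList_length X Y k]; omega

lemma pairList_mem {V : Type*} (X Y : V) : ∀ k, ∀ x ∈ pairList X Y k, x = X ∨ x = Y
  | 0 => by simp [pairList]
  | k + 1 => by
      intro x hx
      simp only [pairList, List.mem_cons] at hx
      rcases hx with rfl | rfl | hx
      · exact Or.inl rfl
      · exact Or.inr rfl
      · exact pairList_mem X Y k x hx

end Aux


theorem stmt17
    {V : Type*} [AddCommGroup V] [Module ℝ V]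
    (n : ℕ) (hn : 2 ≤ n) (e : ℕ → V)
    (hbasis : ∃ b : Module.Basis (Fin (2 * n)) ℝ V, ∀ i : Fin (2 * n), b i = e (i.1 + 1))
    (h ω : V →ₗ[ℝ] V →ₗ[ℝ] ℝ)
    (hsymm : ∀ X Y, h X Y = h Y X)
    (halt : ∀ X, ω X X = 0)
    (S : V →ₗ[ℝ] V)
    (α β : ℝ) (hβ : β ≠ 0)
    (hS1 : S (e 1) = α • e 1 - β • e 2)
    (hS2 : S (e 2) = β • e 1 + α • e 2)
    (hh12 : h (e 1) (e 2) = 1) (hh21 : h (e 2) (e 1) = 1)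
    (hh0 : ∀ i j, 1 ≤ i → i ≤ 2 * n → 1 ≤ j → j ≤ 2 * n → min i j ≤ 2 →
      ¬((i = 1 ∧ j = 2) ∨ (i = 2 ∧ j = 1)) → h (e i) (e j) = 0)
    (p : ℕ) (hp : 1 ≤ p)
    (i : ℕ) (hi3 : 3 ≤ i) (hi : i ≤ 2 * n) :
    Rpow h S ω (2 * p) (pairList (e 1) (e 2) (2 * p) ++ [e 1, e i]) =
      (α ^ 2 + β ^ 2) ^ p * ω (e 1) (e i) ∧
    Rpow h S ω (2 * p) (pairList (e 1) (e 2) (2 * p) ++ [e 2, e i]) =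
      (α ^ 2 + β ^ 2) ^ p * ω (e 2) (e i) := by
  have h11 : h (e 1) (e 1) = 0 := hh0 1 1 le_rfl (by omega) le_rfl (by omega) (by omega) (by omega)
  have h22 : h (e 2) (e 2) = 0 := hh0 2 2 (by omega) (by omega) (by omega) (by omega) (by omega) (by omega)
  have h1i : h (e 1) (e i) = 0 := hh0 1 i (by omega) (by omega) (by omega) hi (by omega) (by omega)
  have h2i : h (e 2) (e i) = 0 := hh0 2 i (by omega) (by omega) (by omega) hi (by omega) (by omega)
  set U : Submodule ℝ V := Submodule.span ℝ {e 1, e 2} with hU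
  have he1 : e 1 ∈ U := Submodule.subset_span (by simp)
  have he2 : e 2 ∈ U := Submodule.subset_span (by simp)
  have coordU : ∀ u ∈ U, ∃ a b : ℝ, u = a • e 1 + b • e 2 := by
    intro u hu
    obtain ⟨a, b, hab⟩ := Submodule.mem_span_pair.mp hu
    exact ⟨a, b, hab.symm⟩
  have hval : ∀ a b c d : ℝ, h (a • e 1 + b • e 2) (c • e 1 + d • e 2) = a * d + b * c := by
    intro a b c d
    simp [map_add, map_smul, h11, h22, hh12, hh21, smul_eq_mul]
    ring
  have Sval : ∀ a b : ℝ, S (a • e 1 + b • e 2) = (a * α + b * β) • e 1 + (b * α - a * β) • e 2 := by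
    intro a b
    simp only [map_add, map_smul, hS1, hS2]
    module
  have RRval : ∀ a b c d x y : ℝ, RR h S (a • e 1 + b • e 2) (c • e 1 + d • e 2) (x • e 1 + y • e 2)
      = ((c * y + d * x) * (a * α + b * β) - (a * y + b * x) * (c * α + d * β)) • e 1
        + ((c * y + d * x) * (b * α - a * β) - (a * y + b * x) * (d * α - c * β)) • e 2 := by
    intro a b c d x y
    rw [RR, hval, hval, Sval, Sval]
    module
  have hSU : ∀ u ∈ U, S u ∈ U := by
    intro u hu
    obtain ⟨a, b, rfl⟩ := coordU u hu
    rw [Sval]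
    exact add_mem (Submodule.smul_mem _ _ he1) (Submodule.smul_mem _ _ he2)
  have hRRU : ∀ u v Z : V, u ∈ U → v ∈ U → RR h S u v Z ∈ U := by
    intro u v Z hu hv
    exact sub_mem (Submodule.smul_mem _ _ (hSU u hu)) (Submodule.smul_mem _ _ (hSU v hv))
  have hUi : ∀ u ∈ U, h u (e i) = 0 := by
    intro u hu
    obtain ⟨a, b, rfl⟩ := coordU u hu
    simp [map_add, map_smul, h1i, h2i, smul_eq_mul]
  have hWlem : ∀ u v : V, u ∈ U → v ∈ U → RR h S u v (e i) = 0 := by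
    intro u v hu hv
    rw [RR, hUi u hu, hUi v hv]
    simp
  have hcomm : ∀ u v X Y Z : V, u ∈ U → v ∈ U → X ∈ U → Y ∈ U → Z ∈ U →
      RR h S (RR h S u v X) Y Z + RR h S X (RR h S u v Y) Z =
        RR h S u v (RR h S X Y Z) - RR h S X Y (RR h S u v Z) := by
    intro u v X Y Z hu hv hX hY hZ
    obtain ⟨a1, a2, rfl⟩ := coordU u hu
    obtain ⟨b1, b2, rfl⟩ := coordU v hv
    obtain ⟨c1, c2, rfl⟩ := coordU X hX
    obtain ⟨d1, d2, rfl⟩ := coordU Y hY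
    obtain ⟨z1, z2, rfl⟩ := coordU Z hZ
    simp only [RRval]
    module
  have hA1 : RR h S (e 1) (e 2) (RR h S (e 1) (e 2) (e 1)) = (α ^ 2 + β ^ 2) • e 1 := by
    have key : RR h S ((1 : ℝ) • e 1 + (0 : ℝ) • e 2) ((0 : ℝ) • e 1 + (1 : ℝ) • e 2)
        (RR h S ((1 : ℝ) • e 1 + (0 : ℝ) • e 2) ((0 : ℝ) • e 1 + (1 : ℝ) • e 2)
          ((1 : ℝ) • e 1 + (0 : ℝ) • e 2)) = (α ^ 2 + β ^ 2) • e 1 := by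
      simp only [RRval]
      module
    simpa using key
  have hA2 : RR h S (e 1) (e 2) (RR h S (e 1) (e 2) (e 2)) = (α ^ 2 + β ^ 2) • e 2 := by
    have key : RR h S ((1 : ℝ) • e 1 + (0 : ℝ) • e 2) ((0 : ℝ) • e 1 + (1 : ℝ) • e 2)
        (RR h S ((1 : ℝ) • e 1 + (0 : ℝ) • e 2) ((0 : ℝ) • e 1 + (1 : ℝ) • e 2)
          ((0 : ℝ) • e 1 + (1 : ℝ) • e 2)) = (α ^ 2 + β ^ 2) • e 2 := by
      simp only [RRval]
      module
    simpa using key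
  have compC : ∀ (Z : V), RR h S (e 1) (e 2) (RR h S (e 1) (e 2) Z) = (α ^ 2 + β ^ 2) • Z →
      ∀ k, Aux.Comp h S (pairList (e 1) (e 2) (2 * k)) Z = ((α ^ 2 + β ^ 2) ^ k) • Z := by
    intro Z hZ k
    induction k with
    | zero => simp [pairList, Aux.Comp]
    | succ k IH =>
        have h2k : 2 * (k + 1) = (2 * k + 1) + 1 := by ring
        rw [h2k]
        show RR h S (e 1) (e 2) (RR h S (e 1) (e 2)
          (Aux.Comp h S (pairList (e 1) (e 2) (2 * k)) Z)) = _
        rw [IH, Aux.RR_smul, Aux.RR_smul, hZ, smul_smul, ← pow_succ]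
  have hmempair : ∀ x ∈ pairList (e 1) (e 2) (2 * p), x ∈ U := by
    intro x hx
    rcases Aux.pairList_mem (e 1) (e 2) (2 * p) x hx with rfl | rfl
    · exact he1
    · exact he2
  have neg1 : ((-1 : ℝ)) ^ (2 * p) = 1 := by
    rw [pow_mul]; norm_num
  constructor
  · rw [Aux.main_lemma h S ω U hcomm hRRU (2 * p) _ (e 1) (e i)
      (Aux.pairList_length _ _ _) hmempair he1 hWlem, neg1, compC (e 1) hA1 p]
    rw [one_mul, map_smul, LinearMap.smul_apply, smul_eq_mul]
  · rw [Aux.main_lemma h S ω U hcomm hRRU (2 * p) _ (e 2) (e i)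
      (Aux.pairList_length _ _ _) hmempair he2 hWlem, neg1, compC (e 2) hA2 p]
    rw [one_mul, map_smul, LinearMap.smul_apply, smul_eq_mul]
end
end

section
/- For every p ≥ 1 and all i, j with 2 < i, j ≤ 2n: (1) (R^{2p}·ω)(e_1, e_2, …, e_1, e_2, e_1, e_i, e_2, e_j), with 2p−1 leading pairs (e_1, e_2), equals 2^{2p−1} β² (α² + β²)^{p−1} h(e_i, e_j) ω(e_1, e_2); (2) (R^{2p}·ω)(e_1, e_2, …, e_1, e_2, e_2, e_i, e_1, e_j), with 2p−1 leading pairs (e_1, e_2), equals 2^{2p−1} β² (α² + β²)^{p−1} h(e_i, e_j) ω(e_1, e_2); (3) (R^{2p}·ω)(e_1, e_2, …, e_1, e_2, e_1, e_i, e_1, e_j) − (R^{2p}·ω)(e_1, e_2, …, e_1, e_2, e_2, e_i, e_2, e_j), each with 2p−1 leading pairs (e_1, e_2), equals −2^{2p} α β (α² + β²)^{p−1} h(e_i, e_j) ω(e_1, e_2). -/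
noncomputable section

namespace Stmt18Aux

variable {V : Type*} [AddCommGroup V] [Module ℝ V]

def Der (A : V →ₗ[ℝ] V) (T : List V → ℝ) (L : List V) : ℝ :=
  ∑ i ∈ Finset.range L.length, T (L.set i (A (L.getD i 0)))

lemma Der_def (A : V →ₗ[ℝ] V) (T : List V → ℝ) (L : List V) :
    Der A T L = ∑ i ∈ Finset.range L.length, T (L.set i (A (L.getD i 0))) := rfl

lemma RAct_cons (h : V →ₗ[ℝ] V →ₗ[ℝ] ℝ) (S : V →ₗ[ℝ] V) (T : List V → ℝ)
    (X Y : V) (Zs : List V) :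
    RAct h S T (X :: Y :: Zs)
      = -∑ i ∈ Finset.range Zs.length, T (Zs.set i (RR h S X Y (Zs.getD i 0))) := rfl

def IsML (T : List V → ℝ) (N : ℕ) : Prop :=
  ∀ (L : List V), L.length = N → ∀ i < N, ∀ (c : ℝ) (x y : V),
    T (L.set i (c • x + y)) = c * T (L.set i x) + T (L.set i y)

lemma getD_set_self (L : List V) {i : ℕ} (hi : i < L.length) (v : V) :
    (L.set i v).getD i 0 = v := by simp [List.getD, hi]

lemma getD_set_ne (L : List V) {i j : ℕ} (hij : i ≠ j) (v : V) :
    (L.set i v).getD j 0 = L.getD j 0 := by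
  simp [List.getD, List.getElem?_set_ne hij]

lemma IsML.zero {T : List V → ℝ} {N : ℕ} (hT : IsML T N) (L : List V)
    (hL : L.length = N) {i : ℕ} (hi : i < N) : T (L.set i 0) = 0 := by
  have := hT L hL i hi 1 0 0
  simp only [one_smul, add_zero] at this
  linarith

lemma IsML.smul {T : List V → ℝ} {N : ℕ} (hT : IsML T N) (L : List V)
    (hL : L.length = N) {i : ℕ} (hi : i < N) (c : ℝ) (x : V) :
    T (L.set i (c • x)) = c * T (L.set i x) := by
  have h1 := hT L hL i hi c x 0
  rw [add_zero] at h1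
  rw [h1, hT.zero L hL hi, add_zero]

lemma IsML.add {T : List V → ℝ} {N : ℕ} (hT : IsML T N) (L : List V)
    (hL : L.length = N) {i : ℕ} (hi : i < N) (x y : V) :
    T (L.set i (x + y)) = T (L.set i x) + T (L.set i y) := by
  have := hT L hL i hi 1 x y
  simpa using this

lemma RR_left (h : V →ₗ[ℝ] V →ₗ[ℝ] ℝ) (S : V →ₗ[ℝ] V) (c : ℝ) (x y Y z : V) :
    RR h S (c • x + y) Y z = c • RR h S x Y z + RR h S y Y z := by
  simp only [RR, map_add, map_smul, LinearMap.add_apply, LinearMap.smul_apply,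
    smul_eq_mul]
  module

lemma RR_right (h : V →ₗ[ℝ] V →ₗ[ℝ] ℝ) (S : V →ₗ[ℝ] V) (c : ℝ) (X x y z : V) :
    RR h S X (c • x + y) z = c • RR h S X x z + RR h S X y z := by
  simp only [RR, map_add, map_smul, LinearMap.add_apply, LinearMap.smul_apply,
    smul_eq_mul]
  module

lemma RR_arg (h : V →ₗ[ℝ] V →ₗ[ℝ] ℝ) (S : V →ₗ[ℝ] V) (c : ℝ) (X Y x y : V) :
    RR h S X Y (c • x + y) = c • RR h S X Y x + RR h S X Y y := by
  simp only [RR, map_add, map_smul, smul_eq_mul]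
  module

lemma RR_pair (h : V →ₗ[ℝ] V →ₗ[ℝ] ℝ) (S : V →ₗ[ℝ] V) (x1 x2 : V)
    (c1 c2 d1 d2 : ℝ) (z : V) :
    RR h S (c1 • x1 + c2 • x2) (d1 • x1 + d2 • x2) z
      = (c1 * d2 - c2 * d1) • RR h S x1 x2 z := by
  simp only [RR, map_add, map_smul, LinearMap.add_apply, LinearMap.smul_apply,
    smul_eq_mul]
  module

lemma ml_RAct (h : V →ₗ[ℝ] V →ₗ[ℝ] ℝ) (S : V →ₗ[ℝ] V) {T : List V → ℝ} {N : ℕ}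
    (hT : IsML T N) : IsML (RAct h S T) (N + 2) := by
  intro L hL i hi c x y
  rcases L with _ | ⟨X, L⟩
  · simp at hL
  rcases L with _ | ⟨Y, Zs⟩
  · simp only [List.length_cons, List.length_nil] at hL; omega
  have hZs : Zs.length = N := by simpa using hL
  match i, hi with
  | 0, _ =>
    simp only [List.set_cons_zero]
    rw [RAct_cons, RAct_cons, RAct_cons]
    have key : ∀ jj ∈ Finset.range Zs.length,
        T (Zs.set jj (RR h S (c • x + y) Y (Zs.getD jj 0)))
          = c * T (Zs.set jj (RR h S x Y (Zs.getD jj 0)))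
            + T (Zs.set jj (RR h S y Y (Zs.getD jj 0))) := by
      intro jj hjj
      rw [Finset.mem_range] at hjj
      rw [RR_left]
      exact hT Zs hZs jj (by omega) c _ _
    rw [Finset.sum_congr rfl key, Finset.sum_add_distrib, ← Finset.mul_sum]
    ring
  | 1, _ =>
    simp only [List.set_cons_succ, List.set_cons_zero]
    rw [RAct_cons, RAct_cons, RAct_cons]
    have key : ∀ jj ∈ Finset.range Zs.length,
        T (Zs.set jj (RR h S X (c • x + y) (Zs.getD jj 0)))
          = c * T (Zs.set jj (RR h S X x (Zs.getD jj 0)))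
            + T (Zs.set jj (RR h S X y (Zs.getD jj 0))) := by
      intro jj hjj
      rw [Finset.mem_range] at hjj
      rw [RR_right]
      exact hT Zs hZs jj (by omega) c _ _
    rw [Finset.sum_congr rfl key, Finset.sum_add_distrib, ← Finset.mul_sum]
    ring
  | (k+2), hi =>
    have hk : k < N := by simp at hi; omega
    simp only [List.set_cons_succ]
    rw [RAct_cons, RAct_cons, RAct_cons]
    simp only [List.length_set]
    have key : ∀ jj ∈ Finset.range Zs.length,
        T ((Zs.set k (c • x + y)).set jj
            (RR h S X Y ((Zs.set k (c • x + y)).getD jj 0)))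
          = c * T ((Zs.set k x).set jj (RR h S X Y ((Zs.set k x).getD jj 0)))
            + T ((Zs.set k y).set jj (RR h S X Y ((Zs.set k y).getD jj 0))) := by
      intro jj hjj
      rw [Finset.mem_range] at hjj
      by_cases hjk : jj = k
      · subst hjk
        rw [List.set_set, List.set_set, List.set_set,
          getD_set_self Zs (by omega), getD_set_self Zs (by omega),
          getD_set_self Zs (by omega), RR_arg]
        exact hT Zs hZs jj (by omega) c _ _
      · have hkj : k ≠ jj := fun hh => hjk hh.symm
        rw [getD_set_ne Zs hkj, getD_set_ne Zs hkj, getD_set_ne Zs hkj,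
          List.set_comm _ _ hkj, List.set_comm _ _ hkj,
          List.set_comm _ _ hkj]
        exact hT (Zs.set jj (RR h S X Y (Zs.getD jj 0))) (by simp [hZs]) k hk c x y
    rw [Finset.sum_congr rfl key, Finset.sum_add_distrib, ← Finset.mul_sum]
    ring

lemma ml_base (ω : V →ₗ[ℝ] V →ₗ[ℝ] ℝ) :
    IsML (fun l : List V => ω (l.getD 0 0) (l.getD 1 0)) 2 := by
  intro L hL i hi c x y
  rcases L with _ | ⟨a, L⟩
  · simp at hL
  rcases L with _ | ⟨b, L⟩
  · simp at hL
  match i, hi with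
  | 0, _ =>
    simp [List.set_cons_zero, map_add, map_smul, LinearMap.add_apply,
      LinearMap.smul_apply, smul_eq_mul]
  | 1, _ =>
    simp [List.set_cons_zero, List.set_cons_succ, map_add, map_smul,
      LinearMap.add_apply, LinearMap.smul_apply, smul_eq_mul]
  | (k+2), hi => omega

lemma Rpow_succ (h : V →ₗ[ℝ] V →ₗ[ℝ] ℝ) (S : V →ₗ[ℝ] V)
    (ω : V →ₗ[ℝ] V →ₗ[ℝ] ℝ) (m : ℕ) :
    Rpow h S ω (m + 1) = RAct h S (Rpow h S ω m) := by
  simp only [Rpow, Function.iterate_succ_apply']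

lemma ml_Rpow (h : V →ₗ[ℝ] V →ₗ[ℝ] ℝ) (S : V →ₗ[ℝ] V)
    (ω : V →ₗ[ℝ] V →ₗ[ℝ] ℝ) : ∀ m, IsML (Rpow h S ω m) (2 * m + 2) := by
  intro m
  induction m with
  | zero => simpa [Rpow] using ml_base ω
  | succ m IH =>
    rw [Rpow_succ]
    have h24 : 2 * (m + 1) + 2 = (2 * m + 2) + 2 := by ring
    rw [h24]
    exact ml_RAct h S IH

lemma ml_Der (A : V →ₗ[ℝ] V) {T : List V → ℝ} {N : ℕ} (hT : IsML T N) :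
    IsML (Der A T) N := by
  intro L hL i hi c x y
  simp only [Der_def, List.length_set]
  have key : ∀ jj ∈ Finset.range L.length,
      T ((L.set i (c • x + y)).set jj (A ((L.set i (c • x + y)).getD jj 0)))
        = c * T ((L.set i x).set jj (A ((L.set i x).getD jj 0)))
          + T ((L.set i y).set jj (A ((L.set i y).getD jj 0))) := by
    intro jj hjj
    rw [Finset.mem_range] at hjj
    by_cases hjk : jj = i
    · subst hjk
      rw [List.set_set, List.set_set, List.set_set,
        getD_set_self L (by omega), getD_set_self L (by omega),
        getD_set_self L (by omega), map_add, map_smul]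
      exact hT L hL jj (by omega) c _ _
    · have hkj : i ≠ jj := fun hh => hjk hh.symm
      rw [getD_set_ne L hkj, getD_set_ne L hkj, getD_set_ne L hkj,
        List.set_comm _ _ hkj, List.set_comm _ _ hkj, List.set_comm _ _ hkj]
      exact hT (L.set jj (A (L.getD jj 0))) (by simp [hL]) i hi c x y
  rw [Finset.sum_congr rfl key, Finset.sum_add_distrib, ← Finset.mul_sum]

lemma ml_DerIter (A : V →ₗ[ℝ] V) {T : List V → ℝ} {N : ℕ} (hT : IsML T N) :
    ∀ k, IsML ((Der A)^[k] T) N := by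
  intro k
  induction k with
  | zero => simpa using hT
  | succ k IH =>
    rw [Function.iterate_succ_apply']
    exact ml_Der A IH

lemma master (h : V →ₗ[ℝ] V →ₗ[ℝ] ℝ) (S : V →ₗ[ℝ] V) (ω : V →ₗ[ℝ] V →ₗ[ℝ] ℝ)
    (x1 x2 : V) (A : V →ₗ[ℝ] V) (α β : ℝ)
    (hA : ∀ z, A z = RR h S x1 x2 z)
    (hA1 : A x1 = α • x1 + (-β) • x2) (hA2 : A x2 = (-β) • x1 + (-α) • x2)
    (m k : ℕ) :
    ∀ (c1 c2 d1 d2 : ℝ) (L : List V), L.length = 2 * m + 2 →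
      (Der A)^[k] (Rpow h S ω (m + 1))
          ((c1 • x1 + c2 • x2) :: (d1 • x1 + d2 • x2) :: L)
        = -(c1 * d2 - c2 * d1) * (Der A)^[k + 1] (Rpow h S ω m) L := by
  induction k with
  | zero =>
    intro c1 c2 d1 d2 L hL
    rw [Function.iterate_zero_apply, Rpow_succ, RAct_cons]
    have hml := ml_Rpow h S ω m
    have key : ∀ jj ∈ Finset.range L.length,
        Rpow h S ω m (L.set jj
            (RR h S (c1 • x1 + c2 • x2) (d1 • x1 + d2 • x2) (L.getD jj 0)))
          = (c1 * d2 - c2 * d1) * Rpow h S ω m (L.set jj (A (L.getD jj 0))) := by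
      intro jj hjj
      rw [Finset.mem_range] at hjj
      rw [RR_pair, ← hA]
      exact hml.smul L hL (by omega) _ _
    rw [Finset.sum_congr rfl key, ← Finset.mul_sum, Function.iterate_one, Der_def]
    ring
  | succ k IH =>
    intro c1 c2 d1 d2 L hL
    have hAa : A (c1 • x1 + c2 • x2)
        = (c1 * α - c2 * β) • x1 + (-(c1 * β) - c2 * α) • x2 := by
      rw [map_add, map_smul, map_smul, hA1, hA2]; module
    have hAb : A (d1 • x1 + d2 • x2)
        = (d1 * α - d2 * β) • x1 + (-(d1 * β) - d2 * α) • x2 := by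
      rw [map_add, map_smul, map_smul, hA1, hA2]; module
    rw [Function.iterate_succ_apply' (Der A) k, Der_def]
    rw [show ((c1 • x1 + c2 • x2) :: (d1 • x1 + d2 • x2) :: L).length
        = L.length + 1 + 1 from by simp]
    rw [Finset.sum_range_succ', Finset.sum_range_succ']
    simp only [List.set_cons_zero, List.set_cons_succ, List.getD_cons_zero,
      List.getD_cons_succ]
    rw [hAa, hAb]
    have hxx : ∀ (a b : ℝ), a • x1 + b • x2 = a • x1 + b • x2 := fun _ _ => rfl
    -- rewrite the three families via IH
    have e0 : (Der A)^[k] (Rpow h S ω (m + 1))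
        (((c1 * α - c2 * β) • x1 + (-(c1 * β) - c2 * α) • x2)
          :: (d1 • x1 + d2 • x2) :: L)
        = -((c1 * α - c2 * β) * d2 - (-(c1 * β) - c2 * α) * d1)
            * (Der A)^[k + 1] (Rpow h S ω m) L := IH _ _ _ _ L hL
    have e1 : (Der A)^[k] (Rpow h S ω (m + 1))
        ((c1 • x1 + c2 • x2)
          :: (((d1 * α - d2 * β) • x1 + (-(d1 * β) - d2 * α) • x2)) :: L)
        = -(c1 * (-(d1 * β) - d2 * α) - c2 * (d1 * α - d2 * β))
            * (Der A)^[k + 1] (Rpow h S ω m) L := IH _ _ _ _ L hL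
    have e2 : ∀ ii ∈ Finset.range L.length,
        (Der A)^[k] (Rpow h S ω (m + 1))
          ((c1 • x1 + c2 • x2) :: (d1 • x1 + d2 • x2)
            :: L.set ii (A (L.getD ii 0)))
          = -(c1 * d2 - c2 * d1)
              * (Der A)^[k + 1] (Rpow h S ω m) (L.set ii (A (L.getD ii 0))) := by
      intro ii hii
      exact IH _ _ _ _ _ (by simp [hL])
    rw [e0, e1, Finset.sum_congr rfl e2, ← Finset.mul_sum]
    rw [Function.iterate_succ_apply' (Der A) (k + 1), Der_def]
    ring

lemma pairList_length (x y : V) : ∀ q, (pairList x y q).length = 2 * q := by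
  intro q
  induction q with
  | zero => simp [pairList]
  | succ q IH => simp [pairList, IH]; ring

lemma chain (h : V →ₗ[ℝ] V →ₗ[ℝ] ℝ) (S : V →ₗ[ℝ] V) (ω : V →ₗ[ℝ] V →ₗ[ℝ] ℝ)
    (x1 x2 : V) (A : V →ₗ[ℝ] V) (α β : ℝ)
    (hA : ∀ z, A z = RR h S x1 x2 z)
    (hA1 : A x1 = α • x1 + (-β) • x2) (hA2 : A x2 = (-β) • x1 + (-α) • x2) :
    ∀ (q k m : ℕ) (T : List V), T.length = 2 * m + 2 →
      (Der A)^[k] (Rpow h S ω (m + q)) (pairList x1 x2 q ++ T)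
        = (-1 : ℝ) ^ q * (Der A)^[k + q] (Rpow h S ω m) T := by
  intro q
  induction q with
  | zero => intro k m T hT; simp [pairList]
  | succ q IH =>
    intro k m T hT
    have h1 : pairList x1 x2 (q + 1) ++ T
        = ((1:ℝ) • x1 + (0:ℝ) • x2) :: ((0:ℝ) • x1 + (1:ℝ) • x2)
            :: (pairList x1 x2 q ++ T) := by
      simp [pairList]
    have hlen : (pairList x1 x2 q ++ T).length = 2 * (m + q) + 2 := by
      simp [pairList_length, hT]; ring
    rw [h1, show m + (q + 1) = (m + q) + 1 from by ring,
      master h S ω x1 x2 A α β hA hA1 hA2 (m + q) k _ _ _ _ _ hlen,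
      IH (k + 1) m T hT,
      show k + 1 + q = k + (q + 1) from by ring, pow_succ]
    ring

def Psi (h : V →ₗ[ℝ] V →ₗ[ℝ] ℝ) (S : V →ₗ[ℝ] V) (ω : V →ₗ[ℝ] V →ₗ[ℝ] ℝ)
    (A : V →ₗ[ℝ] V) (w z : V) (k : ℕ) (x y : V) : ℝ :=
  (Der A)^[k] (Rpow h S ω 1) [x, w, y, z]

variable (h : V →ₗ[ℝ] V →ₗ[ℝ] ℝ) (S : V →ₗ[ℝ] V) (ω : V →ₗ[ℝ] V →ₗ[ℝ] ℝ)
  (A : V →ₗ[ℝ] V) (w z : V)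

lemma ml4 (k : ℕ) : IsML ((Der A)^[k] (Rpow h S ω 1)) 4 := by
  have := ml_DerIter A (ml_Rpow h S ω 1) k
  simpa using this

lemma Psi_succ (hw : A w = 0) (hz : A z = 0) (k : ℕ) (x y : V) :
    Psi h S ω A w z (k + 1) x y
      = Psi h S ω A w z k (A x) y + Psi h S ω A w z k x (A y) := by
  unfold Psi
  rw [Function.iterate_succ_apply', Der_def]
  rw [show ([x, w, y, z] : List V).length = 4 from rfl]
  rw [Finset.sum_range_succ, Finset.sum_range_succ, Finset.sum_range_succ,
    Finset.sum_range_succ, Finset.sum_range_zero]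
  simp only [List.set_cons_zero, List.set_cons_succ, List.getD_cons_zero,
    List.getD_cons_succ, hw, hz, zero_add]
  have h1 : (Der A)^[k] (Rpow h S ω 1) [x, 0, y, z] = 0 := by
    have := (ml4 h S ω A k).zero [x, w, y, z] rfl (i := 1) (by norm_num)
    simpa using this
  have h3 : (Der A)^[k] (Rpow h S ω 1) [x, w, y, 0] = 0 := by
    have := (ml4 h S ω A k).zero [x, w, y, z] rfl (i := 3) (by norm_num)
    simpa using this
  rw [h1, h3]
  ring

lemma Psi_smul_left (k : ℕ) (c : ℝ) (x y : V) :
    Psi h S ω A w z k (c • x) y = c * Psi h S ω A w z k x y := by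
  have := (ml4 h S ω A k).smul [x, w, y, z] rfl (i := 0) (by norm_num) c x
  simpa [Psi] using this

lemma Psi_add_left (k : ℕ) (x x' y : V) :
    Psi h S ω A w z k (x + x') y
      = Psi h S ω A w z k x y + Psi h S ω A w z k x' y := by
  have := (ml4 h S ω A k).add [x, w, y, z] rfl (i := 0) (by norm_num) x x'
  simpa [Psi] using this

lemma Psi_smul_right (k : ℕ) (c : ℝ) (x y : V) :
    Psi h S ω A w z k x (c • y) = c * Psi h S ω A w z k x y := by
  have := (ml4 h S ω A k).smul [x, w, y, z] rfl (i := 2) (by norm_num) c y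
  simpa [Psi] using this

lemma Psi_add_right (k : ℕ) (x y y' : V) :
    Psi h S ω A w z k x (y + y')
      = Psi h S ω A w z k x y + Psi h S ω A w z k x y' := by
  have := (ml4 h S ω A k).add [x, w, y, z] rfl (i := 2) (by norm_num) y y'
  simpa [Psi] using this

lemma Psi_one_AA (hw : A w = 0) (hz : A z = 0) (s : ℝ) (x y : V)
    (hx : A (A x) = s • x) (hy : A (A y) = s • y) :
    Psi h S ω A w z 1 (A x) (A y) = s * Psi h S ω A w z 1 x y := by
  rw [Psi_succ h S ω A w z hw hz 0, Psi_succ h S ω A w z hw hz 0, hx, hy,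
    Psi_smul_left, Psi_smul_right]
  ring

lemma Psi_closed (hw : A w = 0) (hz : A z = 0) (s : ℝ) :
    ∀ (p : ℕ) (x y : V), A (A x) = s • x → A (A y) = s • y →
      Psi h S ω A w z (2 * p + 1) x y = (4 * s) ^ p * Psi h S ω A w z 1 x y := by
  intro p
  induction p with
  | zero => intro x y _ _; simp
  | succ p IH =>
    intro x y hx hy
    have hAx : A (A (A x)) = s • (A x) := by
      rw [hx, map_smul]
    have hAy : A (A (A y)) = s • (A y) := by
      rw [hy, map_smul]
    have s1 := Psi_succ h S ω A w z hw hz (2 * p + 1 + 1) x y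
    have s2 := Psi_succ h S ω A w z hw hz (2 * p + 1) (A x) y
    have s3 := Psi_succ h S ω A w z hw hz (2 * p + 1) x (A y)
    rw [hx, Psi_smul_left] at s2
    rw [hy, Psi_smul_right] at s3
    rw [show 2 * (p + 1) + 1 = (2 * p + 1) + 1 + 1 from by ring, s1, s2, s3,
      IH x y hx hy, IH (A x) (A y) hAx hAy,
      Psi_one_AA h S ω A w z hw hz s x y hx hy]
    ring

lemma Psi_zero (u v : V) :
    Psi h S ω A w z 0 u v = -(ω (RR h S u w v) z) - ω v (RR h S u w z) := by
  unfold Psi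
  rw [Function.iterate_zero_apply,
    show (1 : ℕ) = 0 + 1 from rfl, Rpow_succ, RAct_cons]
  rw [show ([v, z] : List V).length = 2 from rfl]
  rw [Finset.sum_range_succ, Finset.sum_range_succ, Finset.sum_range_zero]
  simp [Rpow, List.set, List.getD]
  ring
end Stmt18Aux

open Stmt18Aux

theorem stmt18
    {V : Type*} [AddCommGroup V] [Module ℝ V]
    (n : ℕ) (hn : 2 ≤ n) (e : ℕ → V)
    (hbasis : ∃ b : Module.Basis (Fin (2 * n)) ℝ V, ∀ i : Fin (2 * n), b i = e (i.1 + 1))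
    (h ω : V →ₗ[ℝ] V →ₗ[ℝ] ℝ)
    (hsymm : ∀ X Y, h X Y = h Y X)
    (halt : ∀ X, ω X X = 0)
    (S : V →ₗ[ℝ] V)
    (α β : ℝ) (hβ : β ≠ 0)
    (hS1 : S (e 1) = α • e 1 - β • e 2)
    (hS2 : S (e 2) = β • e 1 + α • e 2)
    (hh12 : h (e 1) (e 2) = 1) (hh21 : h (e 2) (e 1) = 1)
    (hh0 : ∀ i j, 1 ≤ i → i ≤ 2 * n → 1 ≤ j → j ≤ 2 * n → min i j ≤ 2 →
      ¬((i = 1 ∧ j = 2) ∨ (i = 2 ∧ j = 1)) → h (e i) (e j) = 0)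
    (p : ℕ) (hp : 1 ≤ p)
    (i j : ℕ) (hi2 : 2 < i) (hi : i ≤ 2 * n) (hj2 : 2 < j) (hj : j ≤ 2 * n) :
    Rpow h S ω (2 * p) (pairList (e 1) (e 2) (2 * p - 1) ++ [e 1, e i, e 2, e j]) =
      2 ^ (2 * p - 1) * β ^ 2 * (α ^ 2 + β ^ 2) ^ (p - 1) * h (e i) (e j) * ω (e 1) (e 2) ∧
    Rpow h S ω (2 * p) (pairList (e 1) (e 2) (2 * p - 1) ++ [e 2, e i, e 1, e j]) =
      2 ^ (2 * p - 1) * β ^ 2 * (α ^ 2 + β ^ 2) ^ (p - 1) * h (e i) (e j) * ω (e 1) (e 2) ∧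
    Rpow h S ω (2 * p) (pairList (e 1) (e 2) (2 * p - 1) ++ [e 1, e i, e 1, e j]) -
        Rpow h S ω (2 * p) (pairList (e 1) (e 2) (2 * p - 1) ++ [e 2, e i, e 2, e j]) =
      -(2 ^ (2 * p)) * α * β * (α ^ 2 + β ^ 2) ^ (p - 1) * h (e i) (e j) * ω (e 1) (e 2) := by
  obtain ⟨p', rfl⟩ : ∃ p', p = p' + 1 := ⟨p - 1, by omega⟩
  set A : V →ₗ[ℝ] V :=
    (h (e 2)).smulRight (S (e 1)) - (h (e 1)).smulRight (S (e 2)) with hAdef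
  have hA : ∀ z, A z = RR h S (e 1) (e 2) z := by
    intro z
    simp [hAdef, RR, LinearMap.sub_apply, LinearMap.smulRight_apply]
  have he11 : h (e 1) (e 1) = 0 :=
    hh0 1 1 le_rfl (by omega) le_rfl (by omega) (by omega) (by omega)
  have he22 : h (e 2) (e 2) = 0 :=
    hh0 2 2 (by omega) (by omega) (by omega) (by omega) (by omega) (by omega)
  have h1i : h (e 1) (e i) = 0 :=
    hh0 1 i le_rfl (by omega) (by omega) hi (by omega) (by omega)
  have h2i : h (e 2) (e i) = 0 :=
    hh0 2 i (by omega) (by omega) (by omega) hi (by omega) (by omega)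
  have h1j : h (e 1) (e j) = 0 :=
    hh0 1 j le_rfl (by omega) (by omega) hj (by omega) (by omega)
  have h2j : h (e 2) (e j) = 0 :=
    hh0 2 j (by omega) (by omega) (by omega) hj (by omega) (by omega)
  have hi1 : h (e i) (e 1) = 0 := (hsymm _ _).trans h1i
  have hi2v : h (e i) (e 2) = 0 := (hsymm _ _).trans h2i
  have hA1 : A (e 1) = α • e 1 + (-β) • e 2 := by
    rw [hA]
    simp only [RR, hh21, he11, hS1, one_smul, zero_smul, sub_zero]
    module
  have hA2 : A (e 2) = (-β) • e 1 + (-α) • e 2 := by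
    rw [hA]
    simp only [RR, he22, hh12, hS2, one_smul, zero_smul, zero_sub]
    module
  have hAi : A (e i) = 0 := by
    rw [hA]; simp [RR, h1i, h2i]
  have hAj : A (e j) = 0 := by
    rw [hA]; simp [RR, h1j, h2j]
  have hAA1 : A (A (e 1)) = (α ^ 2 + β ^ 2) • e 1 := by
    rw [hA1, map_add, map_smul, map_smul, hA1, hA2]; module
  have hAA2 : A (A (e 2)) = (α ^ 2 + β ^ 2) • e 2 := by
    rw [hA2, map_add, map_smul, map_smul, hA1, hA2]; module
  have hw11 : ω (e 1) (e 1) = 0 := halt _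
  have hw22 : ω (e 2) (e 2) = 0 := halt _
  have hw21 : ω (e 2) (e 1) = -(ω (e 1) (e 2)) := by
    have h0 := halt (e 1 + e 2)
    simp only [map_add, LinearMap.add_apply, halt] at h0
    linarith
  have P11 : Psi h S ω A (e i) (e j) 0 (e 1) (e 1)
      = h (e i) (e j) * β * ω (e 1) (e 2) := by
    rw [Psi_zero]
    simp [RR, hi1, hi2v, h1j, h2j, he11, he22, hh12, hh21, hS1, hS2,
      map_add, map_smul, map_sub, hw11, hw22, hw21]
    ring
  have P12 : Psi h S ω A (e i) (e j) 0 (e 1) (e 2)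
      = ω (S (e i)) (e j) + h (e i) (e j) * α * ω (e 1) (e 2) := by
    rw [Psi_zero]
    simp [RR, hi1, hi2v, h1j, h2j, he11, he22, hh12, hh21, hS1, hS2,
      map_add, map_smul, map_sub, hw11, hw22, hw21]
    ring
  have P21 : Psi h S ω A (e i) (e j) 0 (e 2) (e 1)
      = ω (S (e i)) (e j) - h (e i) (e j) * α * ω (e 1) (e 2) := by
    rw [Psi_zero]
    simp [RR, hi1, hi2v, h1j, h2j, he11, he22, hh12, hh21, hS1, hS2,
      map_add, map_smul, map_sub, hw11, hw22, hw21]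
    ring
  have P22 : Psi h S ω A (e i) (e j) 0 (e 2) (e 2)
      = h (e i) (e j) * β * ω (e 1) (e 2) := by
    rw [Psi_zero]
    simp [RR, hi1, hi2v, h1j, h2j, he11, he22, hh12, hh21, hS1, hS2,
      map_add, map_smul, map_sub, hw11, hw22, hw21]
    ring
  have Q12 : Psi h S ω A (e i) (e j) 1 (e 1) (e 2)
      = -(2 * β ^ 2 * (h (e i) (e j)) * ω (e 1) (e 2)) := by
    rw [Psi_succ h S ω A (e i) (e j) hAi hAj 0, hA1, hA2,
      Psi_add_left, Psi_smul_left, Psi_smul_left,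
      Psi_add_right, Psi_smul_right, Psi_smul_right, P11, P12, P22]
    ring
  have Q21 : Psi h S ω A (e i) (e j) 1 (e 2) (e 1)
      = -(2 * β ^ 2 * (h (e i) (e j)) * ω (e 1) (e 2)) := by
    rw [Psi_succ h S ω A (e i) (e j) hAi hAj 0, hA1, hA2,
      Psi_add_left, Psi_smul_left, Psi_smul_left,
      Psi_add_right, Psi_smul_right, Psi_smul_right, P11, P21, P22]
    ring
  have Q11 : Psi h S ω A (e i) (e j) 1 (e 1) (e 1)
      = 2 * α * β * (h (e i) (e j)) * ω (e 1) (e 2)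
        - 2 * β * ω (S (e i)) (e j) := by
    rw [Psi_succ h S ω A (e i) (e j) hAi hAj 0, hA1,
      Psi_add_left, Psi_smul_left, Psi_smul_left,
      Psi_add_right, Psi_smul_right, Psi_smul_right, P11, P12, P21]
    ring
  have Q22 : Psi h S ω A (e i) (e j) 1 (e 2) (e 2)
      = -(2 * α * β * (h (e i) (e j)) * ω (e 1) (e 2))
        - 2 * β * ω (S (e i)) (e j) := by
    rw [Psi_succ h S ω A (e i) (e j) hAi hAj 0, hA2,
      Psi_add_left, Psi_smul_left, Psi_smul_left,
      Psi_add_right, Psi_smul_right, Psi_smul_right, P12, P21, P22]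
    ring
  have main : ∀ (x y : V), A (A x) = (α ^ 2 + β ^ 2) • x →
      A (A y) = (α ^ 2 + β ^ 2) • y →
      Rpow h S ω (2 * (p' + 1))
          (pairList (e 1) (e 2) (2 * (p' + 1) - 1) ++ [x, e i, y, e j])
        = -((4 * (α ^ 2 + β ^ 2)) ^ p' * Psi h S ω A (e i) (e j) 1 x y) := by
    intro x y hx hy
    have hsub : 2 * (p' + 1) - 1 = 2 * p' + 1 := by omega
    rw [hsub]
    have hch := chain h S ω (e 1) (e 2) A α β hA hA1 hA2
      (2 * p' + 1) 0 1 [x, e i, y, e j] (by norm_num)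
    rw [Function.iterate_zero_apply] at hch
    rw [show 2 * (p' + 1) = 1 + (2 * p' + 1) from by ring, hch,
      show (0 : ℕ) + (2 * p' + 1) = 2 * p' + 1 from by omega]
    have hid : (Der A)^[2 * p' + 1] (Rpow h S ω 1) [x, e i, y, e j]
        = Psi h S ω A (e i) (e j) (2 * p' + 1) x y := rfl
    rw [hid, Psi_closed h S ω A (e i) (e j) hAi hAj (α ^ 2 + β ^ 2) p' x y hx hy,
      show ((-1 : ℝ)) ^ (2 * p' + 1) = -1 from by
        rw [pow_succ, pow_mul]; norm_num]
    ring
  have hsub : 2 * (p' + 1) - 1 = 2 * p' + 1 := by omega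
  have hsub2 : p' + 1 - 1 = p' := by omega
  have h2pow : (2 : ℝ) ^ (2 * p' + 1) = 4 ^ p' * 2 := by
    rw [pow_succ, pow_mul]; norm_num
  have h2pow2 : (2 : ℝ) ^ (2 * (p' + 1)) = 4 ^ p' * 4 := by
    rw [pow_mul]; norm_num [pow_succ]
  refine ⟨?_, ?_, ?_⟩
  · rw [main (e 1) (e 2) hAA1 hAA2, Q12, hsub, hsub2, h2pow, mul_pow]
    ring
  · rw [main (e 2) (e 1) hAA2 hAA1, Q21, hsub, hsub2, h2pow, mul_pow]
    ring
  · rw [main (e 1) (e 1) hAA1 hAA1, main (e 2) (e 2) hAA2 hAA2, Q11, Q22,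
      hsub2, h2pow2, mul_pow]
    ring
end
end
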